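/- arXiv:2207.06129 — 3 statements merged into one kernel-verified Lean document; each statement's English description precedes it below -/
import Mathlib

section
/- Let w ∈ A_1 and let M be the Hardy–Littlewood maximal operator. Suppose ψ₁ and ψ₂ are positive functions on ℝⁿ × (0,∞) for which there is a constant C > 0, independent of a and r, with ∫_r^∞ ψ₁(a,t) dt/t ≤ C·ψ₂(a,r) for every (a,r) ∈ ℝⁿ × (0,∞). Then M is bounded from M^{1,w}_{ψ₁} to WM^{1,w}_{ψ₂}: there is C' > 0 such that ‖Mf‖_{WM^{1,w}_{ψ₂}} ≤ C'·‖f‖_{M^{1,w}_{ψ₁}} for every f ∈ M^{1,w}_{ψ₁}. -/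
open MeasureTheory Metric Set
open scoped ENNReal

noncomputable section

/-- The weighted measure of a set: `w(E) = ∫_E w(x) dx`, valued in `ℝ≥0∞`. -/
def wSet {n : ℕ} (w : EuclideanSpace ℝ (Fin n) → ℝ)
    (E : Set (EuclideanSpace ℝ (Fin n))) : ℝ≥0∞ :=
  ∫⁻ x in E, ENNReal.ofReal (w x)

/-- The weighted Lebesgue norm `‖f‖_{L^{p,w}(Ω)} = (∫_Ω |f(x)|^p w(x) dx)^{1/p}`. -/
def wLp {n : ℕ} (p : ℝ) (w f : EuclideanSpace ℝ (Fin n) → ℝ)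
    (Ω : Set (EuclideanSpace ℝ (Fin n))) : ℝ≥0∞ :=
  (∫⁻ x in Ω, ENNReal.ofReal |f x| ^ p * ENNReal.ofReal (w x)) ^ (1 / p)

/-- The weighted Lebesgue norm for an `ℝ≥0∞`-valued function. -/
def wLpE {n : ℕ} (p : ℝ) (w : EuclideanSpace ℝ (Fin n) → ℝ)
    (g : EuclideanSpace ℝ (Fin n) → ℝ≥0∞) (Ω : Set (EuclideanSpace ℝ (Fin n))) : ℝ≥0∞ :=
  (∫⁻ x in Ω, g x ^ p * ENNReal.ofReal (w x)) ^ (1 / p)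

/-- The weak weighted Lebesgue norm `‖f‖_{WL^{p,w}(Ω)} = sup_{γ>0} γ·w({x ∈ Ω : |f(x)| > γ})^{1/p}`. -/
def wWeakLp {n : ℕ} (p : ℝ) (w f : EuclideanSpace ℝ (Fin n) → ℝ)
    (Ω : Set (EuclideanSpace ℝ (Fin n))) : ℝ≥0∞ :=
  ⨆ γ : Set.Ioi (0 : ℝ),
    ENNReal.ofReal γ.1 * (wSet w {x | x ∈ Ω ∧ γ.1 < |f x|}) ^ (1 / p)

/-- The weak weighted Lebesgue norm for an `ℝ≥0∞`-valued function. -/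
def wWeakLpE {n : ℕ} (p : ℝ) (w : EuclideanSpace ℝ (Fin n) → ℝ)
    (g : EuclideanSpace ℝ (Fin n) → ℝ≥0∞) (Ω : Set (EuclideanSpace ℝ (Fin n))) : ℝ≥0∞ :=
  ⨆ γ : Set.Ioi (0 : ℝ),
    ENNReal.ofReal γ.1 * (wSet w {x | x ∈ Ω ∧ ENNReal.ofReal γ.1 < g x}) ^ (1 / p)

/-- `f ∈ L^{p,w}_loc`: `f` is measurable and `‖f‖_{L^{p,w}(B)} < ∞` on every ball. -/
def MemLocWLp {n : ℕ} (p : ℝ) (w f : EuclideanSpace ℝ (Fin n) → ℝ) : Prop :=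
  Measurable f ∧ ∀ (a : EuclideanSpace ℝ (Fin n)) (r : ℝ), 0 < r → wLp p w f (ball a r) < ⊤

/-- A weight: nonnegative, measurable, locally integrable, positive a.e. -/
def IsWeight {n : ℕ} (w : EuclideanSpace ℝ (Fin n) → ℝ) : Prop :=
  Measurable w ∧ (∀ x, 0 ≤ w x) ∧ LocallyIntegrable w volume ∧ ∀ᵐ x ∂volume, 0 < w x

/-- The Muckenhoupt class `A_p` for `1 < p`. -/
def MuckAp {n : ℕ} (p : ℝ) (w : EuclideanSpace ℝ (Fin n) → ℝ) : Prop :=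
  ∃ C : ℝ, 0 < C ∧ ∀ (a : EuclideanSpace ℝ (Fin n)) (r : ℝ), 0 < r →
    ((volume (ball a r))⁻¹ * ∫⁻ x in ball a r, ENNReal.ofReal (w x)) *
      ((volume (ball a r))⁻¹ *
        ∫⁻ x in ball a r, ENNReal.ofReal (w x ^ (-(1 / (p - 1))))) ^ (p - 1) ≤
      ENNReal.ofReal C

/-- The Muckenhoupt class `A_1`. -/
def MuckA1 {n : ℕ} (w : EuclideanSpace ℝ (Fin n) → ℝ) : Prop :=
  ∃ C : ℝ, 0 < C ∧ ∀ (a : EuclideanSpace ℝ (Fin n)) (r : ℝ), 0 < r →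
    ((volume (ball a r))⁻¹ * ∫⁻ x in ball a r, ENNReal.ofReal (w x)) *
      essSup (fun x => ENNReal.ofReal (w x)⁻¹) (volume.restrict (ball a r)) ≤
      ENNReal.ofReal C

/-- The class `A_{p,q}` for `1 < p`, where `p'` is the conjugate exponent of `p`. -/
def MuckApq {n : ℕ} (p q p' : ℝ) (w : EuclideanSpace ℝ (Fin n) → ℝ) : Prop :=
  ∃ C : ℝ, 0 < C ∧ ∀ (a : EuclideanSpace ℝ (Fin n)) (r : ℝ), 0 < r →
    ((volume (ball a r))⁻¹ * ∫⁻ x in ball a r, ENNReal.ofReal (w x ^ q)) ^ (1 / q) *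
      ((volume (ball a r))⁻¹ * ∫⁻ x in ball a r, ENNReal.ofReal (w x ^ (-p'))) ^ (1 / p') ≤
      ENNReal.ofReal C

/-- The class `A_{1,q}`. -/
def MuckA1q {n : ℕ} (q : ℝ) (w : EuclideanSpace ℝ (Fin n) → ℝ) : Prop :=
  ∃ C : ℝ, 0 < C ∧ ∀ (a : EuclideanSpace ℝ (Fin n)) (r : ℝ), 0 < r →
    ((volume (ball a r))⁻¹ * ∫⁻ x in ball a r, ENNReal.ofReal (w x ^ q)) ^ (1 / q) *
      essSup (fun x => ENNReal.ofReal (w x)⁻¹) (volume.restrict (ball a r)) ≤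
      ENNReal.ofReal C

/-- The Hardy–Littlewood maximal operator. -/
def HLMax {n : ℕ} (f : EuclideanSpace ℝ (Fin n) → ℝ)
    (x : EuclideanSpace ℝ (Fin n)) : ℝ≥0∞ :=
  ⨆ r : Set.Ioi (0 : ℝ), (volume (ball x r.1))⁻¹ * ∫⁻ y in ball x r.1, ENNReal.ofReal |f y|

/-- The fractional integral operator `I_α` (applied to `|f|`, valued in `ℝ≥0∞`). -/
def fracIntE {n : ℕ} (α : ℝ) (f : EuclideanSpace ℝ (Fin n) → ℝ)
    (x : EuclideanSpace ℝ (Fin n)) : ℝ≥0∞ :=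
  ∫⁻ y, ENNReal.ofReal |f y| / ENNReal.ofReal (dist x y ^ ((n : ℝ) - α))

/-- The fractional maximal operator `M_α`. -/
def fracMax {n : ℕ} (α : ℝ) (f : EuclideanSpace ℝ (Fin n) → ℝ)
    (x : EuclideanSpace ℝ (Fin n)) : ℝ≥0∞ :=
  ⨆ r : Set.Ioi (0 : ℝ),
    (volume (ball x r.1)) ^ (α / (n : ℝ) - 1) * ∫⁻ y in ball x r.1, ENNReal.ofReal |f y|

/-- The generalized weighted Morrey norm `‖f‖_{M^{p,w}_ψ}`. -/
def morreyNorm {n : ℕ} (p : ℝ) (w : EuclideanSpace ℝ (Fin n) → ℝ)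
    (ψ : EuclideanSpace ℝ (Fin n) → ℝ → ℝ) (f : EuclideanSpace ℝ (Fin n) → ℝ) : ℝ≥0∞ :=
  ⨆ (a : EuclideanSpace ℝ (Fin n)) (r : Set.Ioi (0 : ℝ)),
    (ENNReal.ofReal (ψ a r.1))⁻¹ * wSet w (ball a r.1) ^ (-(1 / p)) * wLp p w f (ball a r.1)

/-- The generalized weighted Morrey norm for an `ℝ≥0∞`-valued function. -/
def morreyNormE {n : ℕ} (p : ℝ) (w : EuclideanSpace ℝ (Fin n) → ℝ)
    (ψ : EuclideanSpace ℝ (Fin n) → ℝ → ℝ) (g : EuclideanSpace ℝ (Fin n) → ℝ≥0∞) : ℝ≥0∞ :=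
  ⨆ (a : EuclideanSpace ℝ (Fin n)) (r : Set.Ioi (0 : ℝ)),
    (ENNReal.ofReal (ψ a r.1))⁻¹ * wSet w (ball a r.1) ^ (-(1 / p)) * wLpE p w g (ball a r.1)

/-- The generalized weighted weak Morrey norm `‖f‖_{WM^{p,w}_ψ}`. -/
def morreyWeakNorm {n : ℕ} (p : ℝ) (w : EuclideanSpace ℝ (Fin n) → ℝ)
    (ψ : EuclideanSpace ℝ (Fin n) → ℝ → ℝ) (f : EuclideanSpace ℝ (Fin n) → ℝ) : ℝ≥0∞ :=
  ⨆ (a : EuclideanSpace ℝ (Fin n)) (r : Set.Ioi (0 : ℝ)),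
    (ENNReal.ofReal (ψ a r.1))⁻¹ * wSet w (ball a r.1) ^ (-(1 / p)) * wWeakLp p w f (ball a r.1)

/-- The generalized weighted weak Morrey norm for an `ℝ≥0∞`-valued function. -/
def morreyWeakNormE {n : ℕ} (p : ℝ) (w : EuclideanSpace ℝ (Fin n) → ℝ)
    (ψ : EuclideanSpace ℝ (Fin n) → ℝ → ℝ) (g : EuclideanSpace ℝ (Fin n) → ℝ≥0∞) : ℝ≥0∞ :=
  ⨆ (a : EuclideanSpace ℝ (Fin n)) (r : Set.Ioi (0 : ℝ)),
    (ENNReal.ofReal (ψ a r.1))⁻¹ * wSet w (ball a r.1) ^ (-(1 / p)) * wWeakLpE p w g (ball a r.1)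

end

section Helpers
variable {n : ℕ} {w : EuclideanSpace ℝ (Fin n) → ℝ}

lemma wSet_mono {S T : Set (EuclideanSpace ℝ (Fin n))} (h : S ⊆ T) : wSet w S ≤ wSet w T :=
  lintegral_mono' (Measure.restrict_mono h le_rfl) le_rfl

lemma wSet_ball_ne_top (hw : IsWeight w) (a : EuclideanSpace ℝ (Fin n)) (r : ℝ) :
    wSet w (ball a r) ≠ ∞ := by
  have h1 : IntegrableOn w (closedBall a r) volume :=
    hw.2.2.1.integrableOn_isCompact (isCompact_closedBall a r)
  have h2 := h1.lintegral_lt_top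
  exact ((wSet_mono (ball_subset_closedBall)).trans_lt h2).ne

lemma wSet_ball_pos (hw : IsWeight w) (a : EuclideanSpace ℝ (Fin n)) {r : ℝ} (hr : 0 < r) :
    wSet w (ball a r) ≠ 0 := by
  intro h0
  rw [wSet, lintegral_eq_zero_iff (hw.1.ennreal_ofReal)] at h0
  have hpos : ∀ᵐ x ∂(volume.restrict (ball a r)), 0 < w x := ae_restrict_of_ae hw.2.2.2
  have : ∀ᵐ x ∂(volume.restrict (ball a r)), False := by
    filter_upwards [h0, hpos] with x h1 h2
    simp only [Pi.zero_apply, ENNReal.ofReal_eq_zero] at h1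
    exact absurd h1 (not_le.2 h2)
  rw [ae_iff] at this
  simp only [not_false_eq_true, setOf_true] at this
  rw [Measure.restrict_apply_univ] at this
  exact (measure_ball_pos volume a hr).ne' this

lemma aux_cancel {a x : ℝ≥0∞} (h : a ≠ 0) (h' : a ≠ ∞) : a * (a⁻¹ * x) = x := by
  rw [← mul_assoc, ENNReal.mul_inv_cancel h h', one_mul]

lemma aux_mul_le {γ V I : ℝ≥0∞} (hV : V ≠ 0) (hV' : V ≠ ∞) (h : γ ≤ V⁻¹ * I) : γ * V ≤ I := by
  calc γ * V ≤ V⁻¹ * I * V := mul_le_mul_left h V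
  _ = I * (V⁻¹ * V) := by ring
  _ = I := by rw [ENNReal.inv_mul_cancel hV hV', mul_one]

lemma vol_ball_eq (a x : EuclideanSpace ℝ (Fin n)) {s t : ℝ} (hs : 0 < s) (ht : 0 < t) :
    volume (ball a t) = ENNReal.ofReal ((t/s)^n) * volume (ball x s) := by
  rcases Nat.eq_zero_or_pos n with hn | hn
  · subst hn
    haveI : Subsingleton (EuclideanSpace ℝ (Fin 0)) := ⟨fun a b => by ext i; exact i.elim0⟩
    have hb : ∀ (c : EuclideanSpace ℝ (Fin 0)) {u : ℝ}, 0 < u → ball c u = univ := by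
      intro c u hu
      refine eq_univ_of_forall fun y => ?_
      simp [mem_ball, Subsingleton.elim y c, dist_self, hu]
    rw [hb a ht, hb x hs]
    simp
  · haveI : Nontrivial (EuclideanSpace ℝ (Fin n)) :=
      Module.nontrivial_of_finrank_pos (R := ℝ) (by rw [finrank_euclideanSpace_fin]; exact hn)
    rw [Measure.addHaar_ball _ _ ht.le, Measure.addHaar_ball _ _ hs.le,
      finrank_euclideanSpace_fin]
    rw [← mul_assoc, ← ENNReal.ofReal_mul (by positivity)]
    congr 2
    rw [div_pow, div_mul_cancel₀]
    positivity

lemma aux_cancel' {a x : ℝ≥0∞} (h : a ≠ 0) (h' : a ≠ ∞) : a⁻¹ * (a * x) = x := by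
  rw [← mul_assoc, ENNReal.inv_mul_cancel h h', one_mul]

/-- The `A₁` condition with explicit constant. -/
def A1C {n : ℕ} (C₁ : ℝ) (w : EuclideanSpace ℝ (Fin n) → ℝ) : Prop :=
  ∀ (a : EuclideanSpace ℝ (Fin n)) (r : ℝ), 0 < r →
    ((volume (ball a r))⁻¹ * wSet w (ball a r)) *
      essSup (fun x => ENNReal.ofReal (w x)⁻¹) (volume.restrict (ball a r)) ≤
      ENNReal.ofReal C₁

lemma essSup_inv_le (hw : IsWeight w) {C₁ : ℝ} (hA1 : A1C C₁ w)
    (a : EuclideanSpace ℝ (Fin n)) {r : ℝ} (hr : 0 < r) :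
    essSup (fun x => ENNReal.ofReal (w x)⁻¹) (volume.restrict (ball a r)) ≤
      ENNReal.ofReal C₁ * volume (ball a r) * (wSet w (ball a r))⁻¹ := by
  set V := volume (ball a r) with hV
  set W := wSet w (ball a r) with hW
  have hV0 : V ≠ 0 := (measure_ball_pos volume a hr).ne'
  have hV' : V ≠ ∞ := measure_ball_lt_top.ne
  have hW0 : W ≠ 0 := wSet_ball_pos hw a hr
  have hW' : W ≠ ∞ := wSet_ball_ne_top hw a r
  have ha0 : V⁻¹ * W ≠ 0 := mul_ne_zero (ENNReal.inv_ne_zero.2 hV') hW0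
  have ha' : V⁻¹ * W ≠ ∞ := ENNReal.mul_ne_top (ENNReal.inv_ne_top.2 hV0) hW'
  calc essSup (fun x => ENNReal.ofReal (w x)⁻¹) (volume.restrict (ball a r))
      = (V⁻¹ * W)⁻¹ * ((V⁻¹ * W) *
          essSup (fun x => ENNReal.ofReal (w x)⁻¹) (volume.restrict (ball a r))) :=
        (aux_cancel' ha0 ha').symm
    _ ≤ (V⁻¹ * W)⁻¹ * ENNReal.ofReal C₁ := mul_le_mul_right (hA1 a r hr) _
    _ = ENNReal.ofReal C₁ * V * W⁻¹ := by
        rw [ENNReal.mul_inv (Or.inl (ENNReal.inv_ne_zero.2 hV')) (Or.inl (ENNReal.inv_ne_top.2 hV0)),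
          inv_inv]
        ring

lemma avg_bound (hw : IsWeight w) {C₁ : ℝ} (hA1 : A1C C₁ w)
    (a : EuclideanSpace ℝ (Fin n)) {r : ℝ} (hr : 0 < r) {g : EuclideanSpace ℝ (Fin n) → ℝ} (hg : Measurable g)
    {S : Set (EuclideanSpace ℝ (Fin n))} (hS : S ⊆ ball a r) :
    ∫⁻ x in S, ENNReal.ofReal |g x| ≤
      ENNReal.ofReal C₁ * volume (ball a r) * (wSet w (ball a r))⁻¹ *
        ∫⁻ x in S, ENNReal.ofReal |g x| * ENNReal.ofReal (w x) := by
  set E₀ := essSup (fun x => ENNReal.ofReal (w x)⁻¹) (volume.restrict (ball a r)) with hE₀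
  have hb : ∀ᵐ x ∂(volume.restrict (ball a r)), ENNReal.ofReal (w x)⁻¹ ≤ E₀ := ae_le_essSup
  have hb' : ∀ᵐ x ∂(volume.restrict S), ENNReal.ofReal (w x)⁻¹ ≤ E₀ :=
    (ae_mono (Measure.restrict_mono hS le_rfl)) hb
  have hpos : ∀ᵐ x ∂(volume.restrict S), 0 < w x := ae_restrict_of_ae hw.2.2.2
  have h1 : ∫⁻ x in S, ENNReal.ofReal |g x| ≤
      E₀ * ∫⁻ x in S, ENNReal.ofReal |g x| * ENNReal.ofReal (w x) := by
    have : ∫⁻ x in S, ENNReal.ofReal |g x| ≤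
        ∫⁻ x in S, E₀ * (ENNReal.ofReal |g x| * ENNReal.ofReal (w x)) := by
      refine lintegral_mono_ae ?_
      filter_upwards [hb', hpos] with x h1 h2
      have : ENNReal.ofReal |g x| =
          ENNReal.ofReal (w x)⁻¹ * (ENNReal.ofReal |g x| * ENNReal.ofReal (w x)) := by
        rw [← ENNReal.ofReal_mul (abs_nonneg _), ← ENNReal.ofReal_mul (by positivity)]
        congr 1
        field_simp
      exact this.le.trans (mul_le_mul_left h1 _)
    refine this.trans (le_of_eq ?_)
    exact lintegral_const_mul E₀ ((hg.abs.ennreal_ofReal).mul (hw.1.ennreal_ofReal))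
  refine h1.trans ?_
  exact mul_le_mul_left (essSup_inv_le hw hA1 a hr) _

lemma vol_le_wSet_mul (hw : IsWeight w) (a : EuclideanSpace ℝ (Fin n)) {r₁ r₂ : ℝ}
    (h0 : 0 < r₁) (h12 : r₁ ≤ r₂) :
    volume (ball a r₁) ≤ wSet w (ball a r₁) *
      essSup (fun x => ENNReal.ofReal (w x)⁻¹) (volume.restrict (ball a r₂)) := by
  set E₂ := essSup (fun x => ENNReal.ofReal (w x)⁻¹) (volume.restrict (ball a r₂)) with hE
  have hb : ∀ᵐ x ∂(volume.restrict (ball a r₁)), ENNReal.ofReal (w x)⁻¹ ≤ E₂ :=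
    (ae_mono (Measure.restrict_mono (ball_subset_ball h12) le_rfl)) ae_le_essSup
  have hpos : ∀ᵐ x ∂(volume.restrict (ball a r₁)), 0 < w x := ae_restrict_of_ae hw.2.2.2
  have h1 : volume (ball a r₁) = ∫⁻ _x in ball a r₁, (1 : ℝ≥0∞) := by
    rw [setLIntegral_one]
  rw [h1]
  calc ∫⁻ _x in ball a r₁, (1 : ℝ≥0∞)
      ≤ ∫⁻ x in ball a r₁, ENNReal.ofReal (w x) * E₂ := by
        refine lintegral_mono_ae ?_
        filter_upwards [hb, hpos] with x h1 h2
        have : (1 : ℝ≥0∞) = ENNReal.ofReal (w x) * ENNReal.ofReal (w x)⁻¹ := by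
          rw [← ENNReal.ofReal_mul h2.le]
          rw [mul_inv_cancel₀ h2.ne']
          simp
        exact this.le.trans (mul_le_mul_right h1 _)
    _ = wSet w (ball a r₁) * E₂ := lintegral_mul_const E₂ (hw.1.ennreal_ofReal)

lemma wSet_doubling (hw : IsWeight w) {C₁ : ℝ} (hC₁ : 0 ≤ C₁) (hA1 : A1C C₁ w)
    (a : EuclideanSpace ℝ (Fin n)) {r K : ℝ} (hr : 0 < r) (hK : 1 ≤ K) :
    wSet w (ball a (K * r)) ≤ ENNReal.ofReal (C₁ * K ^ n) * wSet w (ball a r) := by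
  have hKr : 0 < K * r := by positivity
  set V₁ := volume (ball a r) with hV₁
  set V₂ := volume (ball a (K * r)) with hV₂
  set W₁ := wSet w (ball a r) with hW₁
  set W₂ := wSet w (ball a (K * r)) with hW₂
  set E₂ := essSup (fun x => ENNReal.ofReal (w x)⁻¹) (volume.restrict (ball a (K * r))) with hE
  have hV₁0 : V₁ ≠ 0 := (measure_ball_pos volume a hr).ne'
  have hV₁' : V₁ ≠ ∞ := measure_ball_lt_top.ne
  have hV₂0 : V₂ ≠ 0 := (measure_ball_pos volume a hKr).ne'
  have hV₂' : V₂ ≠ ∞ := measure_ball_lt_top.ne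
  have hW₂' : W₂ ≠ ∞ := wSet_ball_ne_top hw a _
  by_cases hE' : E₂ = ∞
  · -- then W₂ = 0
    have h := hA1 a (K * r) hKr
    rw [← hV₂, ← hW₂, ← hE, hE'] at h
    by_cases hW₂0 : W₂ = 0
    · rw [hW₂0]; exact zero_le
    · exfalso
      rw [ENNReal.mul_top (mul_ne_zero (ENNReal.inv_ne_zero.2 hV₂') hW₂0)] at h
      exact (h.trans_lt ENNReal.ofReal_lt_top).ne rfl
  · have h2 : W₂ * E₂ ≤ ENNReal.ofReal C₁ * V₂ := by
      have h := hA1 a (K * r) hKr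
      rw [← hV₂, ← hW₂, ← hE] at h
      calc W₂ * E₂ = V₂ * (V₂⁻¹ * (W₂ * E₂)) := (aux_cancel hV₂0 hV₂').symm
        _ = V₂ * ((V₂⁻¹ * W₂) * E₂) := by ring
        _ ≤ V₂ * ENNReal.ofReal C₁ := mul_le_mul_right h _
        _ = ENNReal.ofReal C₁ * V₂ := mul_comm _ _
    have h3 : V₁ ≤ W₁ * E₂ := vol_le_wSet_mul hw a hr (le_mul_of_one_le_left hr.le hK)
    have h4 : V₂ = ENNReal.ofReal (K ^ n) * V₁ := by
      have := vol_ball_eq (n := n) a a hr hKr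
      rw [mul_div_assoc, div_self hr.ne', mul_one] at this
      exact this
    have h5 : W₂ * V₁ ≤ (ENNReal.ofReal (C₁ * K ^ n) * W₁) * V₁ := by
      calc W₂ * V₁ ≤ W₂ * (W₁ * E₂) := mul_le_mul_right h3 _
        _ = W₁ * (W₂ * E₂) := by ring
        _ ≤ W₁ * (ENNReal.ofReal C₁ * V₂) := mul_le_mul_right h2 _
        _ = W₁ * (ENNReal.ofReal C₁ * (ENNReal.ofReal (K ^ n) * V₁)) := by rw [h4]
        _ = (ENNReal.ofReal C₁ * ENNReal.ofReal (K ^ n) * W₁) * V₁ := by ring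
        _ = (ENNReal.ofReal (C₁ * K ^ n) * W₁) * V₁ := by
            rw [← ENNReal.ofReal_mul hC₁]
    exact (ENNReal.mul_le_mul_iff_left hV₁0 hV₁').1 h5

lemma perball (hw : IsWeight w) {C₁ : ℝ} (hC₁ : 0 ≤ C₁) (hA1 : A1C C₁ w)
    (b : EuclideanSpace ℝ (Fin n)) {s : ℝ} (hs : 0 < s)
    {g : EuclideanSpace ℝ (Fin n) → ℝ} (hg : Measurable g) {γ : ℝ≥0∞}
    (h : γ * volume (ball b s) ≤ ∫⁻ x in ball b s, ENNReal.ofReal |g x|) :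
    γ * wSet w (ball b (5 * s)) ≤
      ENNReal.ofReal (C₁ * 5 ^ n) * ∫⁻ x in ball b s, ENNReal.ofReal |g x| * ENNReal.ofReal (w x) := by
  have hs5 : 0 < 5 * s := by positivity
  set V₁ := volume (ball b s) with hV₁
  set V₅ := volume (ball b (5 * s)) with hV₅
  set W₅ := wSet w (ball b (5 * s)) with hW₅
  set I₁ := ∫⁻ x in ball b s, ENNReal.ofReal |g x| with hI₁
  set J₁ := ∫⁻ x in ball b s, ENNReal.ofReal |g x| * ENNReal.ofReal (w x) with hJ₁
  have hV₁0 : V₁ ≠ 0 := (measure_ball_pos volume b hs).ne'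
  have hV₁' : V₁ ≠ ∞ := measure_ball_lt_top.ne
  have hW₅0 : W₅ ≠ 0 := wSet_ball_pos hw b hs5
  have hW₅' : W₅ ≠ ∞ := wSet_ball_ne_top hw b _
  have havg : I₁ ≤ ENNReal.ofReal C₁ * V₅ * W₅⁻¹ * J₁ :=
    avg_bound hw hA1 b hs5 hg (ball_subset_ball (by linarith))
  have h4 : V₅ = ENNReal.ofReal ((5:ℝ) ^ n) * V₁ := by
    have := vol_ball_eq (n := n) b b hs hs5
    rw [mul_div_assoc, div_self hs.ne', mul_one] at this
    exact this
  have h5 : (γ * W₅) * V₁ ≤ (ENNReal.ofReal (C₁ * 5 ^ n) * J₁) * V₁ := by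
    calc (γ * W₅) * V₁ = W₅ * (γ * V₁) := by ring
      _ ≤ W₅ * I₁ := mul_le_mul_right h _
      _ ≤ W₅ * (ENNReal.ofReal C₁ * V₅ * W₅⁻¹ * J₁) := mul_le_mul_right havg _
      _ = (W₅ * W₅⁻¹) * (ENNReal.ofReal C₁ * V₅ * J₁) := by ring
      _ = ENNReal.ofReal C₁ * V₅ * J₁ := by rw [ENNReal.mul_inv_cancel hW₅0 hW₅', one_mul]
      _ = ENNReal.ofReal C₁ * (ENNReal.ofReal ((5:ℝ) ^ n) * V₁) * J₁ := by rw [h4]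
      _ = (ENNReal.ofReal C₁ * ENNReal.ofReal ((5:ℝ) ^ n) * J₁) * V₁ := by ring
      _ = (ENNReal.ofReal (C₁ * 5 ^ n) * J₁) * V₁ := by
          rw [← ENNReal.ofReal_mul hC₁]
  exact (ENNReal.mul_le_mul_iff_left hV₁0 hV₁').1 h5

lemma weak11 (hw : IsWeight w) {C₁ : ℝ} (hC₁ : 0 ≤ C₁) (hA1 : A1C C₁ w)
    {g : EuclideanSpace ℝ (Fin n) → ℝ} (hg : Measurable g)
    (hI : ∫⁻ x, ENNReal.ofReal |g x| ≠ ∞) {γ : ℝ≥0∞} (hγ0 : γ ≠ 0) (hγ' : γ ≠ ∞) :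
    γ * wSet w {x | γ < HLMax g x} ≤
      ENNReal.ofReal (C₁ * 5 ^ n) * ∫⁻ x, ENNReal.ofReal |g x| * ENNReal.ofReal (w x) := by
  set E := {x | γ < HLMax g x} with hE
  have hsel : ∀ x ∈ E, ∃ s : ℝ, 0 < s ∧
      γ * volume (ball x s) ≤ ∫⁻ y in ball x s, ENNReal.ofReal |g y| := by
    intro x hx
    rw [hE, mem_setOf_eq, HLMax, lt_iSup_iff] at hx
    obtain ⟨s, hs⟩ := hx
    exact ⟨s.1, s.2, aux_mul_le (measure_ball_pos volume x s.2).ne'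
      measure_ball_lt_top.ne hs.le⟩
  rcases Nat.eq_zero_or_pos n with hn | hn
  · -- dimension 0 : the space is a single point
    subst hn
    haveI : Subsingleton (EuclideanSpace ℝ (Fin 0)) := ⟨fun a b => by ext i; exact i.elim0⟩
    rcases eq_empty_or_nonempty E with hEe | ⟨x₀, hx₀⟩
    · rw [hEe]
      simp [wSet]
    · obtain ⟨s, hs, hineq⟩ := hsel x₀ hx₀
      have hball : ∀ {u v : ℝ}, 0 < u → 0 < v → ball x₀ u = ball x₀ v := by
        intro u v hu hv
        have h1 : ball x₀ u = univ := eq_univ_of_forall fun y => by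
          simp [mem_ball, Subsingleton.elim y x₀, hu]
        have h2 : ball x₀ v = univ := eq_univ_of_forall fun y => by
          simp [mem_ball, Subsingleton.elim y x₀, hv]
        rw [h1, h2]
      have h1 : γ * volume (ball x₀ 1) ≤ ∫⁻ y in ball x₀ 1, ENNReal.ofReal |g y| := by
        rwa [hball hs one_pos] at hineq
      have h2 := perball hw hC₁ hA1 x₀ one_pos hg h1
      have hEsub : E ⊆ ball x₀ (5 * 1) := fun y _ => by
        simp [mem_ball, Subsingleton.elim y x₀]
      calc γ * wSet w E ≤ γ * wSet w (ball x₀ (5 * 1)) :=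
            mul_le_mul_right (wSet_mono hEsub) _
        _ ≤ ENNReal.ofReal (C₁ * 5 ^ 0) *
              ∫⁻ x in ball x₀ 1, ENNReal.ofReal |g x| * ENNReal.ofReal (w x) := h2
        _ ≤ _ := mul_le_mul_right (setLIntegral_le_lintegral _ _) _
  · -- positive dimension
    choose! sel hsel1 hsel2 using hsel
    set v := volume (ball (0 : EuclideanSpace ℝ (Fin n)) 1) with hv
    have hv0 : v ≠ 0 := (measure_ball_pos volume _ one_pos).ne'
    have hv' : v ≠ ∞ := measure_ball_lt_top.ne
    set R : ℝ := max 1 ((∫⁻ x, ENNReal.ofReal |g x|) / (γ * v)).toReal with hR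
    have hRbd : ∀ x ∈ E, sel x ≤ R := by
      intro x hx
      rcases le_or_gt (sel x) 1 with h1 | h1
      · exact h1.trans (le_max_left _ _)
      · have hpos := hsel1 x hx
        have hvol : volume (ball x (sel x)) = ENNReal.ofReal ((sel x) ^ n) * v := by
          have h := vol_ball_eq (n := n) x (0 : EuclideanSpace ℝ (Fin n)) one_pos hpos
          rwa [div_one] at h
        have hle : γ * v * ENNReal.ofReal ((sel x) ^ n) ≤ ∫⁻ y, ENNReal.ofReal |g y| := by
          calc γ * v * ENNReal.ofReal ((sel x) ^ n)
              = γ * volume (ball x (sel x)) := by rw [hvol]; ring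
            _ ≤ ∫⁻ y in ball x (sel x), ENNReal.ofReal |g y| := hsel2 x hx
            _ ≤ ∫⁻ y, ENNReal.ofReal |g y| := setLIntegral_le_lintegral _ _
        have hgv0 : γ * v ≠ 0 := mul_ne_zero hγ0 hv0
        have hgv' : γ * v ≠ ∞ := ENNReal.mul_ne_top hγ' hv'
        have hdivne : (∫⁻ x, ENNReal.ofReal |g x|) / (γ * v) ≠ ∞ :=
          (ENNReal.div_lt_top hI hgv0).ne
        have h2 : ENNReal.ofReal ((sel x) ^ n) ≤ (∫⁻ x, ENNReal.ofReal |g x|) / (γ * v) := by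
          rw [ENNReal.le_div_iff_mul_le (Or.inl hgv0) (Or.inl hgv')]
          calc ENNReal.ofReal ((sel x) ^ n) * (γ * v) = γ * v * ENNReal.ofReal ((sel x) ^ n) := by
                ring
            _ ≤ _ := hle
        have h3 : (sel x) ^ n ≤ ((∫⁻ x, ENNReal.ofReal |g x|) / (γ * v)).toReal := by
          rw [← ENNReal.ofReal_le_iff_le_toReal hdivne]
          exact h2
        have h4 : sel x ≤ (sel x) ^ n := le_self_pow₀ h1.le hn.ne'
        exact (h4.trans h3).trans (le_max_right _ _)
    obtain ⟨u, huE, hdisj, hcov⟩ :=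
      Vitali.exists_disjoint_subfamily_covering_enlargement_closedBall E id sel R hRbd 4
        (by norm_num)
    simp only [id] at hdisj hcov
    have hcover : E ⊆ ⋃ b ∈ u, closedBall b (4 * sel b) := by
      intro x hx
      obtain ⟨b, hb, hsub⟩ := hcov x hx
      exact mem_biUnion hb (hsub (mem_closedBall_self (hsel1 x hx).le))
    have hpairwise : Pairwise (Function.onFun Disjoint fun b : u => closedBall b.1 (sel b.1)) := by
      intro i j hij
      exact hdisj i.2 j.2 (fun h => hij (Subtype.ext h))
    have hcnt : u.Countable := by
      have hmeas : ∀ b : u, MeasurableSet (closedBall b.1 (sel b.1)) :=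
        fun b => measurableSet_closedBall
      have := Measure.countable_meas_pos_of_disjoint_iUnion (μ := volume)
        (As := fun b : u => closedBall b.1 (sel b.1)) hmeas hpairwise
      have huniv : {i : u | 0 < volume (closedBall i.1 (sel i.1))} = univ := by
        refine eq_univ_of_forall fun b => ?_
        have hb := hsel1 b.1 (huE b.2)
        exact lt_of_lt_of_le (measure_ball_pos volume b.1 hb)
          (measure_mono ball_subset_closedBall)
      rw [huniv] at this
      rw [← Set.countable_coe_iff]
      exact (countable_univ_iff (α := u)).1 this
    haveI : Countable u := hcnt.to_subtype
    have hball5 : Pairwise (Function.onFun Disjoint fun b : u => ball b.1 (sel b.1)) := by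
      intro i j hij
      exact (hpairwise hij).mono ball_subset_closedBall ball_subset_closedBall
    calc γ * wSet w E ≤ γ * wSet w (⋃ b : u, closedBall b.1 (4 * sel b.1)) := by
          refine mul_le_mul_right (wSet_mono ?_) _
          refine hcover.trans ?_
          rw [biUnion_eq_iUnion]
      _ ≤ γ * ∑' b : u, wSet w (closedBall b.1 (4 * sel b.1)) :=
          mul_le_mul_right (lintegral_iUnion_le _ _) _
      _ = ∑' b : u, γ * wSet w (closedBall b.1 (4 * sel b.1)) := ENNReal.tsum_mul_left.symm
      _ ≤ ∑' b : u, ENNReal.ofReal (C₁ * 5 ^ n) *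
            ∫⁻ x in ball b.1 (sel b.1), ENNReal.ofReal |g x| * ENNReal.ofReal (w x) := by
          refine ENNReal.tsum_le_tsum fun b => ?_
          have hb := hsel1 b.1 (huE b.2)
          have hsub : closedBall b.1 (4 * sel b.1) ⊆ ball b.1 (5 * sel b.1) :=
            closedBall_subset_ball (by linarith)
          exact (mul_le_mul_right (wSet_mono hsub) γ).trans
            (perball hw hC₁ hA1 b.1 hb hg (hsel2 b.1 (huE b.2)))
      _ = ENNReal.ofReal (C₁ * 5 ^ n) *
            ∑' b : u, ∫⁻ x in ball b.1 (sel b.1), ENNReal.ofReal |g x| * ENNReal.ofReal (w x) :=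
          ENNReal.tsum_mul_left
      _ ≤ _ := by
          refine mul_le_mul_right ?_ _
          rw [← lintegral_iUnion (fun b => measurableSet_ball) hball5]
          exact setLIntegral_le_lintegral _ _

lemma ioo_bound {X K N' Y : ℝ≥0∞} (hK' : K ≠ ∞) (hN' : N' ≠ ∞) {ψ : ℝ → ℝ} {r u : ℝ}
    (hr : 0 < r) (hu : r < u)
    (hpoint : ∀ t ∈ Ioo u (2 * u), X ≤ K * ENNReal.ofReal (ψ t) * N')
    (hint : ∫⁻ t in Ioi r, ENNReal.ofReal (ψ t) * ENNReal.ofReal t⁻¹ ≤ Y) :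
    X ≤ ENNReal.ofReal 2 * K * Y * N' := by
  have hu0 : 0 < u := hr.trans hu
  have hg : Measurable fun t : ℝ => ENNReal.ofReal t⁻¹ :=
    ENNReal.measurable_ofReal.comp measurable_inv
  have h1 : X * ∫⁻ t in Ioo u (2 * u), ENNReal.ofReal t⁻¹ ≤ K * N' * Y := by
    calc X * ∫⁻ t in Ioo u (2 * u), ENNReal.ofReal t⁻¹
        = ∫⁻ t in Ioo u (2 * u), X * ENNReal.ofReal t⁻¹ := (lintegral_const_mul X hg).symm
      _ ≤ ∫⁻ t in Ioo u (2 * u),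
            (K * N') * (ENNReal.ofReal (ψ t) * ENNReal.ofReal t⁻¹) := by
          refine setLIntegral_mono' measurableSet_Ioo fun t ht => ?_
          calc X * ENNReal.ofReal t⁻¹ ≤ (K * ENNReal.ofReal (ψ t) * N') * ENNReal.ofReal t⁻¹ :=
                mul_le_mul_left (hpoint t ht) _
            _ = (K * N') * (ENNReal.ofReal (ψ t) * ENNReal.ofReal t⁻¹) := by ring
      _ = (K * N') * ∫⁻ t in Ioo u (2 * u), ENNReal.ofReal (ψ t) * ENNReal.ofReal t⁻¹ :=
          lintegral_const_mul' _ _ (ENNReal.mul_ne_top hK' hN')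
      _ ≤ (K * N') * ∫⁻ t in Ioi r, ENNReal.ofReal (ψ t) * ENNReal.ofReal t⁻¹ := by
          refine mul_le_mul_right (lintegral_mono' (Measure.restrict_mono ?_ le_rfl) le_rfl) _
          intro t ht
          exact lt_trans hu ht.1
      _ ≤ (K * N') * Y := mul_le_mul_right hint _
  have h2 : ENNReal.ofReal (1 / 2) ≤ ∫⁻ t in Ioo u (2 * u), ENNReal.ofReal t⁻¹ := by
    have hc : ∫⁻ _t in Ioo u (2 * u), ENNReal.ofReal (2 * u)⁻¹ = ENNReal.ofReal (1 / 2) := by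
      rw [setLIntegral_const, Real.volume_Ioo, ← ENNReal.ofReal_mul (by positivity)]
      congr 1
      field_simp
      ring
    rw [← hc]
    refine setLIntegral_mono hg fun t ht => ?_
    exact ENNReal.ofReal_le_ofReal (inv_anti₀ (hu0.trans ht.1) ht.2.le)
  have h3 : X * ENNReal.ofReal (1 / 2) ≤ K * N' * Y := le_trans (mul_le_mul_right h2 X) h1
  have e : ENNReal.ofReal (1 / 2) * ENNReal.ofReal 2 = 1 := by
    rw [← ENNReal.ofReal_mul (by norm_num)]
    norm_num
  calc X = X * (ENNReal.ofReal (1 / 2) * ENNReal.ofReal 2) := by rw [e, mul_one]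
    _ = (X * ENNReal.ofReal (1 / 2)) * ENNReal.ofReal 2 := by ring
    _ ≤ (K * N' * Y) * ENNReal.ofReal 2 := mul_le_mul_left h3 _
    _ = ENNReal.ofReal 2 * K * Y * N' := by ring

lemma wSet_empty {n : ℕ} (w : EuclideanSpace ℝ (Fin n) → ℝ) : wSet w ∅ = 0 := by
  simp [wSet]

lemma cancel_le {p W J N : ℝ≥0∞} (hp0 : p ≠ 0) (hp' : p ≠ ∞) (hW0 : W ≠ 0) (hW' : W ≠ ∞)
    (h : p⁻¹ * W⁻¹ * J ≤ N) : J ≤ p * W * N := by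
  have e : p * W * (p⁻¹ * W⁻¹ * J) = J := by
    calc p * W * (p⁻¹ * W⁻¹ * J) = (p * p⁻¹) * ((W * W⁻¹) * J) := by ring
      _ = J := by
          rw [ENNReal.mul_inv_cancel hp0 hp', ENNReal.mul_inv_cancel hW0 hW', one_mul, one_mul]
  calc J = p * W * (p⁻¹ * W⁻¹ * J) := e.symm
    _ ≤ p * W * N := mul_le_mul_right h _

lemma cancel_le' {p W X c N : ℝ≥0∞} (hp0 : p ≠ 0) (hp' : p ≠ ∞) (hW0 : W ≠ 0) (hW' : W ≠ ∞)
    (h : X ≤ c * p * W * N) : p⁻¹ * W⁻¹ * X ≤ c * N := by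
  calc p⁻¹ * W⁻¹ * X ≤ p⁻¹ * W⁻¹ * (c * p * W * N) := mul_le_mul_right h _
    _ = (p * p⁻¹) * ((W * W⁻¹) * (c * N)) := by ring
    _ = c * N := by
        rw [ENNReal.mul_inv_cancel hp0 hp', ENNReal.mul_inv_cancel hW0 hW', one_mul, one_mul]

lemma collapse2 {a b : ℝ} (ha : 0 ≤ a) :
    ENNReal.ofReal a * ENNReal.ofReal b = ENNReal.ofReal (a * b) :=
  (ENNReal.ofReal_mul ha).symm


end Helpers
/-- Let `w ∈ A_1`, and let `ψ₁, ψ₂` be positive functions on `ℝⁿ × (0,∞)`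
with `∫_r^∞ ψ₁(a,t) dt/t ≤ C·ψ₂(a,r)` for all `(a,r)`. Then the Hardy–Littlewood maximal
operator is bounded from `M^{1,w}_{ψ₁}` to `WM^{1,w}_{ψ₂}`. -/
theorem statement11 {n : ℕ}
    (w : EuclideanSpace ℝ (Fin n) → ℝ) (hw : IsWeight w) (hA1 : MuckA1 w)
    (ψ₁ ψ₂ : EuclideanSpace ℝ (Fin n) → ℝ → ℝ)
    (hψ₁ : ∀ a r, 0 < r → 0 < ψ₁ a r) (hψ₂ : ∀ a r, 0 < r → 0 < ψ₂ a r)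
    (C : ℝ) (hC : 0 < C)
    (hcond : ∀ (a : EuclideanSpace ℝ (Fin n)) (r : ℝ), 0 < r →
      (∫⁻ t in Set.Ioi r, ENNReal.ofReal (ψ₁ a t) * ENNReal.ofReal t⁻¹) ≤
        ENNReal.ofReal (C * ψ₂ a r)) :
    ∃ C' : ℝ, 0 < C' ∧ ∀ f : EuclideanSpace ℝ (Fin n) → ℝ,
      MemLocWLp 1 w f → morreyNorm 1 w ψ₁ f < ⊤ →
      morreyWeakNormE 1 w ψ₂ (HLMax f) ≤ ENNReal.ofReal C' * morreyNorm 1 w ψ₁ f := by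
  classical
  obtain ⟨C₁, hC₁pos, hA1'⟩ := hA1
  have hA1c : A1C C₁ w := fun a r hr => hA1' a r hr
  have h4n : (0:ℝ) ≤ C₁ * 4 ^ n := mul_nonneg hC₁pos.le (by positivity)
  have h5n : (0:ℝ) ≤ C₁ * 5 ^ n := mul_nonneg hC₁pos.le (by positivity)
  set Cbig : ℝ := 4 * C * (C₁ * 4 ^ n) * (C₁ * 5 ^ n + 1) + 1 with hCbigdef
  have hCbigpos : 0 < Cbig := by
    have h1 : (0:ℝ) ≤ 4 * C * (C₁ * 4 ^ n) * (C₁ * 5 ^ n + 1) :=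
      mul_nonneg (mul_nonneg (by linarith) h4n) (by linarith)
    rw [hCbigdef]; linarith
  refine ⟨Cbig, hCbigpos, ?_⟩
  intro f hf hfin
  set N := morreyNorm 1 w ψ₁ f with hNdef
  have hN' : N ≠ ∞ := hfin.ne
  -- extraction from the Morrey norm
  have hJle : ∀ (a : EuclideanSpace ℝ (Fin n)) (t : ℝ), 0 < t →
      (∫⁻ x in ball a t, ENNReal.ofReal |f x| * ENNReal.ofReal (w x)) ≤
        ENNReal.ofReal (ψ₁ a t) * wSet w (ball a t) * N := by
    intro a t ht
    have h0 : (ENNReal.ofReal (ψ₁ a t))⁻¹ * wSet w (ball a t) ^ (-(1/1) : ℝ) *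
        wLp 1 w f (ball a t) ≤ N := by
      rw [hNdef, morreyNorm]
      exact le_iSup₂ (f := fun (a : EuclideanSpace ℝ (Fin n)) (r : Set.Ioi (0:ℝ)) =>
        (ENNReal.ofReal (ψ₁ a r.1))⁻¹ * wSet w (ball a r.1) ^ (-(1/1) : ℝ) *
          wLp 1 w f (ball a r.1)) a ⟨t, ht⟩
    rw [show (-(1/1) : ℝ) = -1 by norm_num, ENNReal.rpow_neg_one, wLp,
      show ((1:ℝ)/1) = 1 by norm_num, ENNReal.rpow_one] at h0
    simp only [ENNReal.rpow_one] at h0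
    exact cancel_le (ENNReal.ofReal_pos.2 (hψ₁ a t ht)).ne' ENNReal.ofReal_ne_top
      (wSet_ball_pos hw a ht) (wSet_ball_ne_top hw a t) h0
  -- pointwise average bound
  have hIle : ∀ (a : EuclideanSpace ℝ (Fin n)) (t : ℝ), 0 < t →
      (∫⁻ x in ball a t, ENNReal.ofReal |f x|) ≤
        ENNReal.ofReal C₁ * ENNReal.ofReal (ψ₁ a t) * volume (ball a t) * N := by
    intro a t ht
    have hW0 : wSet w (ball a t) ≠ 0 := wSet_ball_pos hw a ht
    have hW' : wSet w (ball a t) ≠ ∞ := wSet_ball_ne_top hw a t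
    calc (∫⁻ x in ball a t, ENNReal.ofReal |f x|)
        ≤ ENNReal.ofReal C₁ * volume (ball a t) * (wSet w (ball a t))⁻¹ *
            ∫⁻ x in ball a t, ENNReal.ofReal |f x| * ENNReal.ofReal (w x) :=
          avg_bound hw hA1c a ht hf.1 (Set.Subset.refl _)
      _ ≤ ENNReal.ofReal C₁ * volume (ball a t) * (wSet w (ball a t))⁻¹ *
            (ENNReal.ofReal (ψ₁ a t) * wSet w (ball a t) * N) :=
          mul_le_mul_right (hJle a t ht) _
      _ = ((wSet w (ball a t))⁻¹ * wSet w (ball a t)) *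
            (ENNReal.ofReal C₁ * ENNReal.ofReal (ψ₁ a t) * volume (ball a t) * N) := by ring
      _ = ENNReal.ofReal C₁ * ENNReal.ofReal (ψ₁ a t) * volume (ball a t) * N := by
          rw [ENNReal.inv_mul_cancel hW0 hW', one_mul]
  -- the key estimate for a fixed ball and level
  have key : ∀ (a : EuclideanSpace ℝ (Fin n)) (r γ : ℝ), 0 < r → 0 < γ →
      ENNReal.ofReal γ * wSet w {x | x ∈ ball a r ∧ ENNReal.ofReal γ < HLMax f x} ≤
        ENNReal.ofReal Cbig * ENNReal.ofReal (ψ₂ a r) * wSet w (ball a r) * N := by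
    intro a r γ hr hγ
    have h2r : 0 < 2 * r := by linarith
    set B2 := ball a (2 * r) with hB2
    set f₁ := B2.indicator f with hf₁def
    set f₂ := B2ᶜ.indicator f with hf₂def
    have hmf₁ : Measurable f₁ := hf.1.indicator measurableSet_ball
    have hmf₂ : Measurable f₂ := hf.1.indicator measurableSet_ball.compl
    have habs : ∀ y, ENNReal.ofReal |f y| = ENNReal.ofReal |f₁ y| + ENNReal.ofReal |f₂ y| := by
      intro y
      by_cases hy : y ∈ B2 <;>
        simp [hf₁def, hf₂def, indicator_of_mem, indicator_of_notMem, hy]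
    have habs2 : ∀ y, ENNReal.ofReal |f₂ y| ≤ ENNReal.ofReal |f y| := by
      intro y
      by_cases hy : y ∈ B2 <;>
        simp [hf₂def, indicator_of_mem, indicator_of_notMem, hy, abs_nonneg]
    have hsplit : ∀ x, HLMax f x ≤ HLMax f₁ x + HLMax f₂ x := by
      intro x
      simp only [HLMax]
      refine iSup_le fun s => ?_
      have h1 : (∫⁻ y in ball x s.1, ENNReal.ofReal |f y|) =
          (∫⁻ y in ball x s.1, ENNReal.ofReal |f₁ y|) +
            ∫⁻ y in ball x s.1, ENNReal.ofReal |f₂ y| := by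
        rw [← lintegral_add_left (hmf₁.abs.ennreal_ofReal)]
        exact lintegral_congr fun y => habs y
      rw [h1, mul_add]
      exact add_le_add (le_iSup (fun s : Set.Ioi (0:ℝ) =>
          (volume (ball x s.1))⁻¹ * ∫⁻ y in ball x s.1, ENNReal.ofReal |f₁ y|) s)
        (le_iSup (fun s : Set.Ioi (0:ℝ) =>
          (volume (ball x s.1))⁻¹ * ∫⁻ y in ball x s.1, ENNReal.ofReal |f₂ y|) s)
    set K := ENNReal.ofReal (C₁ * 4 ^ n) with hKdef
    -- tail estimate
    have htail : ∀ x ∈ ball a r, HLMax f₂ x ≤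
        ENNReal.ofReal 2 * K * ENNReal.ofReal (C * ψ₂ a r) * N := by
      intro x hx
      have hxa : dist x a < r := mem_ball.1 hx
      rw [HLMax]
      refine iSup_le fun s => ?_
      have hs0 : (0:ℝ) < s.1 := s.2
      rcases le_or_gt s.1 r with hsr | hsr
      · have hzero : (∫⁻ y in ball x s.1, ENNReal.ofReal |f₂ y|) = 0 := by
          refine le_antisymm ?_ (zero_le)
          have hb : ∀ y ∈ ball x s.1, ENNReal.ofReal |f₂ y| ≤ 0 := by
            intro y hy
            have hyx : dist y x < s.1 := mem_ball.1 hy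
            have hyB2 : y ∈ B2 := by
              rw [hB2, mem_ball]
              calc dist y a ≤ dist y x + dist x a := dist_triangle y x a
                _ < 2 * r := by linarith
            rw [hf₂def, indicator_of_notMem (by simpa using hyB2)]
            simp
          calc (∫⁻ y in ball x s.1, ENNReal.ofReal |f₂ y|)
              ≤ ∫⁻ _y in ball x s.1, (0:ℝ≥0∞) := setLIntegral_mono' measurableSet_ball hb
            _ = 0 := by simp
        rw [hzero, mul_zero]
        exact zero_le
      · have hVs0 : volume (ball x s.1) ≠ 0 := (measure_ball_pos volume x hs0).ne'
        have hVs' : volume (ball x s.1) ≠ ∞ := measure_ball_lt_top.ne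
        have hpoint : ∀ t ∈ Ioo (2 * s.1) (2 * (2 * s.1)),
            (volume (ball x s.1))⁻¹ * (∫⁻ y in ball x s.1, ENNReal.ofReal |f₂ y|) ≤
              K * ENNReal.ofReal (ψ₁ a t) * N := by
          intro t ht
          have hts : t < 4 * s.1 := by have := ht.2; linarith
          have ht2s : 2 * s.1 < t := ht.1
          have ht0 : (0:ℝ) < t := by linarith
          have hsub : ball x s.1 ⊆ ball a t := by
            intro y hy
            rw [mem_ball] at hy ⊢
            calc dist y a ≤ dist y x + dist x a := dist_triangle y x a
              _ < t := by linarith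
          have hI2 : (∫⁻ y in ball x s.1, ENNReal.ofReal |f₂ y|) ≤
              ∫⁻ y in ball a t, ENNReal.ofReal |f y| :=
            lintegral_mono' (Measure.restrict_mono hsub le_rfl) fun y => habs2 y
          have hVt : volume (ball a t) ≤ ENNReal.ofReal ((4:ℝ) ^ n) * volume (ball x s.1) := by
            rw [vol_ball_eq a x hs0 ht0]
            refine mul_le_mul_left (ENNReal.ofReal_le_ofReal ?_) _
            refine pow_le_pow_left₀ (by positivity) ?_ n
            rw [div_le_iff₀ hs0]
            linarith
          calc (volume (ball x s.1))⁻¹ * (∫⁻ y in ball x s.1, ENNReal.ofReal |f₂ y|)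
              ≤ (volume (ball x s.1))⁻¹ *
                  (ENNReal.ofReal C₁ * ENNReal.ofReal (ψ₁ a t) * volume (ball a t) * N) :=
                mul_le_mul_right (hI2.trans (hIle a t ht0)) _
            _ ≤ (volume (ball x s.1))⁻¹ *
                  (ENNReal.ofReal C₁ * ENNReal.ofReal (ψ₁ a t) *
                    (ENNReal.ofReal ((4:ℝ) ^ n) * volume (ball x s.1)) * N) := by
                gcongr
            _ = ((volume (ball x s.1))⁻¹ * volume (ball x s.1)) *
                  (ENNReal.ofReal C₁ * ENNReal.ofReal ((4:ℝ) ^ n) *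
                    ENNReal.ofReal (ψ₁ a t) * N) := by ring
            _ = (ENNReal.ofReal C₁ * ENNReal.ofReal ((4:ℝ) ^ n)) *
                  ENNReal.ofReal (ψ₁ a t) * N := by
                rw [ENNReal.inv_mul_cancel hVs0 hVs', one_mul]
            _ = K * ENNReal.ofReal (ψ₁ a t) * N := by
                rw [hKdef, ← ENNReal.ofReal_mul hC₁pos.le]
        exact ioo_bound ENNReal.ofReal_ne_top hN' hr (by linarith) hpoint (hcond a r hr)
    -- bound on the weighted integral over the double ball
    have hW0 : wSet w (ball a r) ≠ 0 := wSet_ball_pos hw a hr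
    have hW' : wSet w (ball a r) ≠ ∞ := wSet_ball_ne_top hw a r
    have hJ2r : (∫⁻ x in B2, ENNReal.ofReal |f x| * ENNReal.ofReal (w x)) ≤
        ENNReal.ofReal 2 * (K * wSet w (ball a r)) * ENNReal.ofReal (C * ψ₂ a r) * N := by
      have hpoint : ∀ t ∈ Ioo (2 * r) (2 * (2 * r)),
          (∫⁻ x in B2, ENNReal.ofReal |f x| * ENNReal.ofReal (w x)) ≤
            (K * wSet w (ball a r)) * ENNReal.ofReal (ψ₁ a t) * N := by
        intro t ht
        have ht0 : (0:ℝ) < t := by have := ht.1; linarith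
        have hsub : B2 ⊆ ball a t := ball_subset_ball (by have := ht.1; linarith)
        have hWt : wSet w (ball a t) ≤ K * wSet w (ball a r) := by
          have h1 : wSet w (ball a t) ≤ wSet w (ball a (4 * r)) :=
            wSet_mono (ball_subset_ball (by have := ht.2; linarith))
          exact h1.trans (wSet_doubling hw hC₁pos.le hA1c a hr (by norm_num))
        calc (∫⁻ x in B2, ENNReal.ofReal |f x| * ENNReal.ofReal (w x))
            ≤ ∫⁻ x in ball a t, ENNReal.ofReal |f x| * ENNReal.ofReal (w x) :=
              lintegral_mono' (Measure.restrict_mono hsub le_rfl) le_rfl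
          _ ≤ ENNReal.ofReal (ψ₁ a t) * wSet w (ball a t) * N := hJle a t ht0
          _ ≤ ENNReal.ofReal (ψ₁ a t) * (K * wSet w (ball a r)) * N := by gcongr
          _ = (K * wSet w (ball a r)) * ENNReal.ofReal (ψ₁ a t) * N := by ring
      exact ioo_bound (ENNReal.mul_ne_top ENNReal.ofReal_ne_top hW') hN' hr
        (by linarith) hpoint (hcond a r hr)
    -- the weak (1,1) estimate for f₁
    have hIf₁eq : (∫⁻ x, ENNReal.ofReal |f₁ x|) = ∫⁻ x in B2, ENNReal.ofReal |f x| := by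
      rw [← lintegral_indicator measurableSet_ball (fun x => ENNReal.ofReal |f x|)]
      refine lintegral_congr fun y => ?_
      by_cases hy : y ∈ B2 <;>
        simp [hf₁def, indicator_of_mem, indicator_of_notMem, hy, ← hB2]
    have hJf₁eq : (∫⁻ x, ENNReal.ofReal |f₁ x| * ENNReal.ofReal (w x)) =
        ∫⁻ x in B2, ENNReal.ofReal |f x| * ENNReal.ofReal (w x) := by
      rw [← lintegral_indicator measurableSet_ball
        (fun x => ENNReal.ofReal |f x| * ENNReal.ofReal (w x))]
      refine lintegral_congr fun y => ?_
      by_cases hy : y ∈ B2 <;>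
        simp [hf₁def, indicator_of_mem, indicator_of_notMem, hy, ← hB2]
    have hIf₁fin : (∫⁻ x, ENNReal.ofReal |f₁ x|) ≠ ∞ := by
      rw [hIf₁eq]
      refine ((hIle a (2*r) h2r).trans_lt ?_).ne
      refine ENNReal.mul_lt_top (ENNReal.mul_lt_top (ENNReal.mul_lt_top
        ENNReal.ofReal_lt_top ENNReal.ofReal_lt_top) measure_ball_lt_top) hN'.lt_top
    have hγ2 : ENNReal.ofReal (γ/2) ≠ 0 := (ENNReal.ofReal_pos.2 (by linarith)).ne'
    have hweak := weak11 hw hC₁pos.le hA1c hmf₁ hIf₁fin hγ2 ENNReal.ofReal_ne_top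
    rw [hJf₁eq] at hweak
    -- assembling
    set W := wSet w (ball a r) with hWdef
    set S₁ := {x | ENNReal.ofReal (γ/2) < HLMax f₁ x} with hS₁def
    set S₂ := {x | x ∈ ball a r ∧ ENNReal.ofReal (γ/2) < HLMax f₂ x} with hS₂def
    have hSsub : {x | x ∈ ball a r ∧ ENNReal.ofReal γ < HLMax f x} ⊆ S₁ ∪ S₂ := by
      rintro x ⟨hxb, hxγ⟩
      have h1 : ENNReal.ofReal (γ/2) < HLMax f₁ x ∨ ENNReal.ofReal (γ/2) < HLMax f₂ x := by
        by_contra hcon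
        push_neg at hcon
        have hle : HLMax f x ≤ ENNReal.ofReal (γ/2) + ENNReal.ofReal (γ/2) :=
          (hsplit x).trans (add_le_add hcon.1 hcon.2)
        rw [← ENNReal.ofReal_add (by linarith) (by linarith),
          show γ/2 + γ/2 = γ by ring] at hle
        exact absurd hxγ (not_lt.2 hle)
      rcases h1 with h | h
      · exact Or.inl h
      · exact Or.inr ⟨hxb, h⟩
    have hwS : wSet w {x | x ∈ ball a r ∧ ENNReal.ofReal γ < HLMax f x} ≤
        wSet w S₁ + wSet w S₂ := by
      refine (wSet_mono hSsub).trans ?_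
      rw [wSet, wSet, wSet]
      refine (lintegral_mono' (Measure.restrict_union_le _ _) le_rfl).trans ?_
      rw [lintegral_add_measure]
    have hγeq : ENNReal.ofReal γ = ENNReal.ofReal 2 * ENNReal.ofReal (γ/2) := by
      rw [← ENNReal.ofReal_mul (by norm_num)]
      congr 1
      ring
    have hterm1 : ENNReal.ofReal γ * wSet w S₁ ≤
        ENNReal.ofReal (4 * C * (C₁ * 4 ^ n) * (C₁ * 5 ^ n) * ψ₂ a r) * (W * N) := by
      calc ENNReal.ofReal γ * wSet w S₁
          = ENNReal.ofReal 2 * (ENNReal.ofReal (γ/2) * wSet w S₁) := by rw [hγeq]; ring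
        _ ≤ ENNReal.ofReal 2 * (ENNReal.ofReal (C₁ * 5 ^ n) *
              ∫⁻ x in B2, ENNReal.ofReal |f x| * ENNReal.ofReal (w x)) :=
            mul_le_mul_right hweak _
        _ ≤ ENNReal.ofReal 2 * (ENNReal.ofReal (C₁ * 5 ^ n) *
              (ENNReal.ofReal 2 * (K * W) * ENNReal.ofReal (C * ψ₂ a r) * N)) := by
            exact mul_le_mul_right (mul_le_mul_right hJ2r _) _
        _ = (ENNReal.ofReal 2 * ENNReal.ofReal (C₁ * 5 ^ n) * ENNReal.ofReal 2 * K *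
              ENNReal.ofReal (C * ψ₂ a r)) * (W * N) := by ring
        _ = ENNReal.ofReal (4 * C * (C₁ * 4 ^ n) * (C₁ * 5 ^ n) * ψ₂ a r) * (W * N) := by
            rw [hKdef, collapse2 (by norm_num : (0:ℝ) ≤ 2),
              collapse2 (by positivity : (0:ℝ) ≤ 2 * (C₁ * 5 ^ n) ) ,
              collapse2 (by positivity : (0:ℝ) ≤ 2 * (C₁ * 5 ^ n) * 2),
              collapse2 (by positivity : (0:ℝ) ≤ 2 * (C₁ * 5 ^ n) * 2 * (C₁ * 4 ^ n))]
            congr 2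
            ring
    have hterm2 : ENNReal.ofReal γ * wSet w S₂ ≤
        ENNReal.ofReal (4 * C * (C₁ * 4 ^ n) * ψ₂ a r) * (W * N) := by
      rcases Set.eq_empty_or_nonempty S₂ with hS2e | ⟨x, hxS⟩
      · rw [hS2e, wSet_empty, mul_zero]
        exact zero_le
      · have hx2 : ENNReal.ofReal (γ/2) ≤
            ENNReal.ofReal 2 * K * ENNReal.ofReal (C * ψ₂ a r) * N :=
          (hxS.2).le.trans (htail x hxS.1)
        have hγle : ENNReal.ofReal γ ≤
            ENNReal.ofReal 2 * (ENNReal.ofReal 2 * K * ENNReal.ofReal (C * ψ₂ a r) * N) := by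
          rw [hγeq]
          exact mul_le_mul_right hx2 _
        have hS2W : wSet w S₂ ≤ W := wSet_mono fun y hy => hy.1
        calc ENNReal.ofReal γ * wSet w S₂
            ≤ (ENNReal.ofReal 2 * (ENNReal.ofReal 2 * K * ENNReal.ofReal (C * ψ₂ a r) * N)) *
                W := mul_le_mul' hγle hS2W
          _ = (ENNReal.ofReal 2 * ENNReal.ofReal 2 * K * ENNReal.ofReal (C * ψ₂ a r)) *
                (W * N) := by ring
          _ = ENNReal.ofReal (4 * C * (C₁ * 4 ^ n) * ψ₂ a r) * (W * N) := by
              rw [hKdef, collapse2 (by norm_num : (0:ℝ) ≤ 2),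
                collapse2 (by norm_num : (0:ℝ) ≤ 2 * 2),
                collapse2 (by positivity : (0:ℝ) ≤ 2 * 2 * (C₁ * 4 ^ n))]
              congr 2
              ring
    have hψ₂r : 0 < ψ₂ a r := hψ₂ a r hr
    calc ENNReal.ofReal γ * wSet w {x | x ∈ ball a r ∧ ENNReal.ofReal γ < HLMax f x}
        ≤ ENNReal.ofReal γ * (wSet w S₁ + wSet w S₂) := mul_le_mul_right hwS _
      _ = ENNReal.ofReal γ * wSet w S₁ + ENNReal.ofReal γ * wSet w S₂ := mul_add _ _ _
      _ ≤ ENNReal.ofReal (4 * C * (C₁ * 4 ^ n) * (C₁ * 5 ^ n) * ψ₂ a r) * (W * N) +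
            ENNReal.ofReal (4 * C * (C₁ * 4 ^ n) * ψ₂ a r) * (W * N) :=
          add_le_add hterm1 hterm2
      _ = ENNReal.ofReal (4 * C * (C₁ * 4 ^ n) * (C₁ * 5 ^ n) * ψ₂ a r +
            4 * C * (C₁ * 4 ^ n) * ψ₂ a r) * (W * N) := by
          rw [ENNReal.ofReal_add
            (by positivity : (0:ℝ) ≤ 4 * C * (C₁ * 4 ^ n) * (C₁ * 5 ^ n) * ψ₂ a r)
            (by positivity : (0:ℝ) ≤ 4 * C * (C₁ * 4 ^ n) * ψ₂ a r), add_mul]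
      _ ≤ ENNReal.ofReal (Cbig * ψ₂ a r) * (W * N) := by
          refine mul_le_mul_left (ENNReal.ofReal_le_ofReal ?_) _
          rw [hCbigdef]
          nlinarith [hψ₂r.le, h4n, h5n, hC.le]
      _ = ENNReal.ofReal Cbig * ENNReal.ofReal (ψ₂ a r) * W * N := by
          rw [ENNReal.ofReal_mul hCbigpos.le]
          ring
  -- conclude
  rw [morreyWeakNormE]
  refine iSup_le fun a => iSup_le fun r => ?_
  rw [wWeakLpE, ENNReal.mul_iSup]
  refine iSup_le fun γ => ?_
  rw [show (-(1/1) : ℝ) = -1 by norm_num, ENNReal.rpow_neg_one,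
    show ((1:ℝ)/1) = 1 by norm_num, ENNReal.rpow_one]
  exact cancel_le' (ENNReal.ofReal_pos.2 (hψ₂ a r.1 r.2)).ne' ENNReal.ofReal_ne_top
    (wSet_ball_pos hw a r.2) (wSet_ball_ne_top hw a r.1)
    (key a r.1 γ.1 r.2 γ.2)
end

section
/- Let w ∈ A_1. Let T be an operator mapping measurable functions on ℝⁿ to measurable functions on ℝⁿ such that: (i) T is additive, T(f+g) = Tf + Tg; (ii) T is bounded from L^{1,w} to WL^{1,w}, i.e. there is C₀ > 0 with ‖Tf‖_{WL^{1,w}(ℝⁿ)} ≤ C₀‖f‖_{L^{1,w}(ℝⁿ)} for every f ∈ L^{1,w}; and (iii) there is A > 0 such that |Tf(x)| ≤ A·∫_{ℝⁿ} |f(y)|/|x−y|^n dy for every f and every x outside the support of f. Then there exists a constant C > 0, independent of f, a, and r, such that for every a ∈ ℝⁿ, r > 0, and f ∈ L^{1,w}_loc: ‖Tf‖_{WL^{1,w}(B(a,r))} ≤ C·w(B(a,r))·∫_r^∞ w(B(a,s))^{-1} ‖f‖_{L^{1,w}(B(a,s))} ds/s. -/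
open MeasureTheory Metric Set
open scoped ENNReal

noncomputable section
namespace S18
variable {n : ℕ}

lemma wSet_mono (w : EuclideanSpace ℝ (Fin n) → ℝ) {E F : Set (EuclideanSpace ℝ (Fin n))}
    (h : E ⊆ F) : wSet w E ≤ wSet w F :=
  lintegral_mono' (Measure.restrict_mono h le_rfl) le_rfl

lemma wSet_union_le (w : EuclideanSpace ℝ (Fin n) → ℝ) (E F : Set (EuclideanSpace ℝ (Fin n))) :
    wSet w (E ∪ F) ≤ wSet w E + wSet w F :=
  lintegral_union_le _ _ _

lemma wSet_ball_pos (w : EuclideanSpace ℝ (Fin n) → ℝ) (hm : Measurable w)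
    (hpos : ∀ᵐ x ∂(volume : Measure (EuclideanSpace ℝ (Fin n))), 0 < w x)
    (a : EuclideanSpace ℝ (Fin n)) {r : ℝ} (hr : 0 < r) : 0 < wSet w (ball a r) := by
  rw [pos_iff_ne_zero]
  intro h0
  rw [wSet, lintegral_eq_zero_iff hm.ennreal_ofReal] at h0
  have hne : (volume.restrict (ball a r) : Measure (EuclideanSpace ℝ (Fin n))) ≠ 0 := by
    rw [← Measure.measure_univ_ne_zero, Measure.restrict_apply_univ]
    exact (measure_ball_pos volume a hr).ne'
  haveI := ae_neBot.mpr hne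
  obtain ⟨x, hx0, hxp⟩ := (h0.and (ae_restrict_of_ae hpos)).exists
  simp only [Pi.zero_apply, ENNReal.ofReal_eq_zero] at hx0
  linarith

lemma wSet_ball_lt_top (w : EuclideanSpace ℝ (Fin n) → ℝ) (hli : LocallyIntegrable w volume)
    (a : EuclideanSpace ℝ (Fin n)) (r : ℝ) : wSet w (ball a r) < ⊤ := by
  have h1 : IntegrableOn w (ball a r) volume :=
    (hli.integrableOn_isCompact (isCompact_closedBall a r)).mono_set ball_subset_closedBall
  exact h1.lintegral_lt_top

lemma vol_ball_eq (a : EuclideanSpace ℝ (Fin n)) {r : ℝ} (hr : 0 < r) :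
    volume (ball a r) = ENNReal.ofReal (r ^ n) * volume (ball (0 : EuclideanSpace ℝ (Fin n)) 1) := by
  rw [Measure.addHaar_ball_of_pos volume a hr, finrank_euclideanSpace_fin]

end S18

namespace S18
variable {n : ℕ}

/-- abbreviation for the essential sup of `1/w` on a ball -/
def Sb (w : EuclideanSpace ℝ (Fin n) → ℝ) (a : EuclideanSpace ℝ (Fin n)) (r : ℝ) : ℝ≥0∞ :=
  essSup (fun x => ENNReal.ofReal (w x)⁻¹) (volume.restrict (ball a r))

lemma Sb_mono (w : EuclideanSpace ℝ (Fin n) → ℝ) (a : EuclideanSpace ℝ (Fin n)) {r r' : ℝ}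
    (h : r ≤ r') : Sb w a r ≤ Sb w a r' :=
  essSup_mono_measure (Measure.absolutelyContinuous_of_le
    (Measure.restrict_mono (ball_subset_ball h) le_rfl))

lemma vol_le_Sb_mul_wSet (w : EuclideanSpace ℝ (Fin n) → ℝ) (hm : Measurable w)
    (hpos : ∀ᵐ x ∂(volume : Measure (EuclideanSpace ℝ (Fin n))), 0 < w x)
    (a : EuclideanSpace ℝ (Fin n)) (r : ℝ) :
    volume (ball a r) ≤ wSet w (ball a r) * Sb w a r := by
  have hae : ∀ᵐ x ∂(volume.restrict (ball a r)), ENNReal.ofReal (w x)⁻¹ ≤ Sb w a r :=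
    ae_le_essSup
  have hp : ∀ᵐ x ∂(volume.restrict (ball a r)), 0 < w x := ae_restrict_of_ae hpos
  calc volume (ball a r) = ∫⁻ x in ball a r, 1 := (setLIntegral_one _).symm
    _ ≤ ∫⁻ x in ball a r, ENNReal.ofReal (w x) * Sb w a r := by
        refine lintegral_mono_ae ((hae.and hp).mono fun x hx => ?_)
        obtain ⟨h1, h2⟩ := hx
        rw [ENNReal.ofReal_inv_of_pos h2] at h1
        calc (1 : ℝ≥0∞) = ENNReal.ofReal (w x) * (ENNReal.ofReal (w x))⁻¹ :=
              (ENNReal.mul_inv_cancel (by simpa using h2) ENNReal.ofReal_ne_top).symm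
          _ ≤ ENNReal.ofReal (w x) * Sb w a r := mul_le_mul_right h1 _
    _ = wSet w (ball a r) * Sb w a r :=
        lintegral_mul_const'' _ hm.ennreal_ofReal.aemeasurable

lemma wSet_mul_Sb_le (w : EuclideanSpace ℝ (Fin n) → ℝ) {CA : ℝ}
    (a : EuclideanSpace ℝ (Fin n)) {r : ℝ} (hr : 0 < r)
    (hkey : ((volume (ball a r))⁻¹ * ∫⁻ x in ball a r, ENNReal.ofReal (w x)) * Sb w a r ≤
      ENNReal.ofReal CA) :
    wSet w (ball a r) * Sb w a r ≤ ENNReal.ofReal CA * volume (ball a r) := by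
  have hv0 : volume (ball a r) ≠ 0 := (measure_ball_pos volume a hr).ne'
  have hvt : volume (ball a r) ≠ ⊤ := measure_ball_lt_top.ne
  have heq : wSet w (ball a r) * Sb w a r =
      volume (ball a r) * (((volume (ball a r))⁻¹ * wSet w (ball a r)) * Sb w a r) := by
    rw [← mul_assoc, ← mul_assoc, ENNReal.mul_inv_cancel hv0 hvt, one_mul]
  rw [heq]
  calc volume (ball a r) * (((volume (ball a r))⁻¹ * wSet w (ball a r)) * Sb w a r)
      ≤ volume (ball a r) * ENNReal.ofReal CA := mul_le_mul_right hkey _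
    _ = ENNReal.ofReal CA * volume (ball a r) := mul_comm _ _

lemma Sb_ne_zero (w : EuclideanSpace ℝ (Fin n) → ℝ) (hm : Measurable w)
    (hpos : ∀ᵐ x ∂(volume : Measure (EuclideanSpace ℝ (Fin n))), 0 < w x)
    (a : EuclideanSpace ℝ (Fin n)) {r : ℝ} (hr : 0 < r) : Sb w a r ≠ 0 := by
  intro h0
  have := vol_le_Sb_mul_wSet w hm hpos a r
  rw [h0, mul_zero] at this
  exact (measure_ball_pos volume a hr).ne' (le_antisymm this zero_le)

lemma Sb_ne_top (w : EuclideanSpace ℝ (Fin n) → ℝ) (hm : Measurable w)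
    (hpos : ∀ᵐ x ∂(volume : Measure (EuclideanSpace ℝ (Fin n))), 0 < w x) {CA : ℝ}
    (a : EuclideanSpace ℝ (Fin n)) {r : ℝ} (hr : 0 < r)
    (hW0 : wSet w (ball a r) ≠ 0)
    (hkey : ((volume (ball a r))⁻¹ * ∫⁻ x in ball a r, ENNReal.ofReal (w x)) * Sb w a r ≤
      ENNReal.ofReal CA) : Sb w a r ≠ ⊤ := by
  intro ht
  have h2 := wSet_mul_Sb_le w a hr hkey
  rw [ht, ENNReal.mul_top hW0] at h2
  have : (⊤ : ℝ≥0∞) < ⊤ :=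
    lt_of_le_of_lt h2 (ENNReal.mul_lt_top ENNReal.ofReal_lt_top measure_ball_lt_top)
  exact lt_irrefl _ this

lemma Sb_le (w : EuclideanSpace ℝ (Fin n) → ℝ) {CA : ℝ}
    (a : EuclideanSpace ℝ (Fin n)) {r : ℝ} (hr : 0 < r)
    (hW0 : wSet w (ball a r) ≠ 0) (hWt : wSet w (ball a r) ≠ ⊤)
    (hkey : ((volume (ball a r))⁻¹ * ∫⁻ x in ball a r, ENNReal.ofReal (w x)) * Sb w a r ≤
      ENNReal.ofReal CA) :
    Sb w a r ≤ (wSet w (ball a r))⁻¹ * (ENNReal.ofReal CA * volume (ball a r)) := by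
  have heq : Sb w a r = (wSet w (ball a r))⁻¹ * (wSet w (ball a r) * Sb w a r) := by
    rw [← mul_assoc, ENNReal.inv_mul_cancel hW0 hWt, one_mul]
  rw [heq]
  exact mul_le_mul_right (wSet_mul_Sb_le w a hr hkey) _

end S18

namespace S18
variable {n : ℕ}

lemma lint_Ioi_rpow (hn : 0 < n) {d : ℝ} (hd : 0 < d) :
    ENNReal.ofReal n * ∫⁻ s in Ioi d, ENNReal.ofReal (s ^ (-(n:ℝ) - 1)) =
      (ENNReal.ofReal (d ^ n))⁻¹ := by
  have hn1 : (1:ℝ) ≤ n := by exact_mod_cast hn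
  have ha : -(n:ℝ) - 1 < -1 := by linarith
  have hint := integrableOn_Ioi_rpow_of_lt ha hd
  have hnn : 0 ≤ᶠ[ae (volume.restrict (Ioi d))] fun s : ℝ => s ^ (-(n:ℝ) - 1) :=
    (ae_restrict_iff' measurableSet_Ioi).2
      (Filter.Eventually.of_forall fun s hs => Real.rpow_nonneg (hd.trans hs).le _)
  rw [← ofReal_integral_eq_lintegral_ofReal hint hnn, integral_Ioi_rpow_of_lt ha hd]
  have hn0 : (n:ℝ) ≠ 0 := by positivity
  have h1 : -d ^ (-(n:ℝ) - 1 + 1) / (-(n:ℝ) - 1 + 1) = d ^ (-(n:ℝ)) / n := by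
    rw [show -(n:ℝ) - 1 + 1 = -(n:ℝ) by ring, neg_div_neg_eq]
  rw [h1, ← ENNReal.ofReal_mul (by positivity)]
  have h2 : (n:ℝ) * (d ^ (-(n:ℝ)) / n) = (d ^ n)⁻¹ := by
    rw [Real.rpow_neg hd.le, Real.rpow_natCast]; field_simp
  rw [h2, ENNReal.ofReal_inv_of_pos (pow_pos hd n)]

lemma doubling (w : EuclideanSpace ℝ (Fin n) → ℝ) (hm : Measurable w)
    (hpos : ∀ᵐ x ∂(volume : Measure (EuclideanSpace ℝ (Fin n))), 0 < w x)
    {CA : ℝ}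
    (hkey : ∀ (a : EuclideanSpace ℝ (Fin n)) (r : ℝ), 0 < r →
      ((volume (ball a r))⁻¹ * ∫⁻ x in ball a r, ENNReal.ofReal (w x)) * Sb w a r ≤
        ENNReal.ofReal CA)
    (a : EuclideanSpace ℝ (Fin n)) {r : ℝ} (hr : 0 < r) :
    wSet w (ball a (4*r)) ≤ ENNReal.ofReal CA * ENNReal.ofReal (4 ^ n) * wSet w (ball a r) := by
  have hr4 : 0 < 4 * r := by linarith
  have hS0 : Sb w a r ≠ 0 := Sb_ne_zero w hm hpos a hr
  have hSt : Sb w a r ≠ ⊤ :=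
    Sb_ne_top w hm hpos a hr (wSet_ball_pos w hm hpos a hr).ne' (hkey a r hr)
  rw [← ENNReal.mul_le_mul_iff_left hS0 hSt]
  calc wSet w (ball a (4*r)) * Sb w a r
      ≤ wSet w (ball a (4*r)) * Sb w a (4*r) :=
        mul_le_mul_right (Sb_mono w a (by linarith)) _
    _ ≤ ENNReal.ofReal CA * volume (ball a (4*r)) := wSet_mul_Sb_le w a hr4 (hkey a _ hr4)
    _ = ENNReal.ofReal CA * (ENNReal.ofReal (4 ^ n) * volume (ball a r)) := by
        rw [vol_ball_eq a hr4, vol_ball_eq a hr, show ((4:ℝ)*r)^n = 4^n * r^n by ring,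
          ENNReal.ofReal_mul (by positivity), mul_assoc]
    _ ≤ ENNReal.ofReal CA * (ENNReal.ofReal (4 ^ n) * (wSet w (ball a r) * Sb w a r)) := by
        gcongr
        exact vol_le_Sb_mul_wSet w hm hpos a r
    _ = ENNReal.ofReal CA * ENNReal.ofReal (4 ^ n) * wSet w (ball a r) * Sb w a r := by ring

end S18

namespace S18
variable {n : ℕ}

lemma U_le (w : EuclideanSpace ℝ (Fin n) → ℝ) (hm : Measurable w)
    (hpos : ∀ᵐ x ∂(volume : Measure (EuclideanSpace ℝ (Fin n))), 0 < w x)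
    {f : EuclideanSpace ℝ (Fin n) → ℝ} (hf : Measurable f)
    (a : EuclideanSpace ℝ (Fin n)) (s : ℝ) :
    (∫⁻ y in ball a s, ENNReal.ofReal |f y|) ≤
      Sb w a s * ∫⁻ y in ball a s, ENNReal.ofReal |f y| * ENNReal.ofReal (w y) := by
  have hae : ∀ᵐ y ∂(volume.restrict (ball a s)), ENNReal.ofReal (w y)⁻¹ ≤ Sb w a s :=
    ae_le_essSup
  have hp : ∀ᵐ y ∂(volume.restrict (ball a s)), 0 < w y := ae_restrict_of_ae hpos
  calc (∫⁻ y in ball a s, ENNReal.ofReal |f y|)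
      ≤ ∫⁻ y in ball a s, Sb w a s * (ENNReal.ofReal |f y| * ENNReal.ofReal (w y)) := by
        refine lintegral_mono_ae ((hae.and hp).mono fun y hy => ?_)
        obtain ⟨h1, h2⟩ := hy
        rw [ENNReal.ofReal_inv_of_pos h2] at h1
        have h3 : (1:ℝ≥0∞) ≤ ENNReal.ofReal (w y) * Sb w a s :=
          (ENNReal.mul_inv_cancel (by simpa using h2) ENNReal.ofReal_ne_top).symm.le.trans
            (mul_le_mul_right h1 _)
        calc ENNReal.ofReal |f y| = ENNReal.ofReal |f y| * 1 := (mul_one _).symm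
          _ ≤ ENNReal.ofReal |f y| * (ENNReal.ofReal (w y) * Sb w a s) :=
              mul_le_mul_right h3 _
          _ = Sb w a s * (ENNReal.ofReal |f y| * ENNReal.ofReal (w y)) := by ring
    _ = Sb w a s * ∫⁻ y in ball a s, ENNReal.ofReal |f y| * ENNReal.ofReal (w y) :=
        lintegral_const_mul _ (hf.abs.ennreal_ofReal.mul hm.ennreal_ofReal)

end S18

namespace S18
variable {n : ℕ}

lemma far_bound (w : EuclideanSpace ℝ (Fin n) → ℝ) (hm : Measurable w)
    (hpos : ∀ᵐ x ∂(volume : Measure (EuclideanSpace ℝ (Fin n))), 0 < w x)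
    (hli : LocallyIntegrable w volume)
    {CA : ℝ}
    (hkey : ∀ (a : EuclideanSpace ℝ (Fin n)) (r : ℝ), 0 < r →
      ((volume (ball a r))⁻¹ * ∫⁻ x in ball a r, ENNReal.ofReal (w x)) * Sb w a r ≤
        ENNReal.ofReal CA)
    {f : EuclideanSpace ℝ (Fin n) → ℝ} (hf : Measurable f) (hn : 0 < n)
    (a : EuclideanSpace ℝ (Fin n)) {r : ℝ} (hr : 0 < r)
    {x : EuclideanSpace ℝ (Fin n)} (hx : x ∈ ball a r) :
    (∫⁻ y, ENNReal.ofReal |(ball a (2*r))ᶜ.indicator f y| /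
        ENNReal.ofReal (dist x y ^ n)) ≤
      ENNReal.ofReal (2 ^ n * n * CA) * volume (ball (0 : EuclideanSpace ℝ (Fin n)) 1) *
        ∫⁻ s in Ioi (2*r),
          (wSet w (ball a s))⁻¹ *
            (∫⁻ y in ball a s, ENNReal.ofReal |f y| * ENNReal.ofReal (w y)) *
            ENNReal.ofReal s⁻¹ := by
  set g : EuclideanSpace ℝ (Fin n) → ℝ≥0∞ := fun y => ENNReal.ofReal |f y| with hg
  set h : ℝ → ℝ≥0∞ := fun s => ENNReal.ofReal (s ^ (-(n:ℝ) - 1)) with hhdef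
  have hr2 : 0 < 2 * r := by linarith
  -- Step 1: restrict to the complement of the double ball
  have step1 : (fun y => ENNReal.ofReal |(ball a (2*r))ᶜ.indicator f y| /
      ENNReal.ofReal (dist x y ^ n)) =
      (ball a (2*r))ᶜ.indicator (fun y => g y / ENNReal.ofReal (dist x y ^ n)) := by
    funext y
    by_cases hy : y ∈ ball a (2*r)
    · simp [Set.indicator_of_notMem (by simpa using hy : y ∉ (ball a (2*r))ᶜ)]
    · simp [Set.indicator_of_mem (by simpa using hy : y ∈ (ball a (2*r))ᶜ), hg]
  rw [step1, lintegral_indicator measurableSet_ball.compl]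
  -- Step 2+3: pointwise kernel comparison
  have step2 : (∫⁻ y in (ball a (2*r))ᶜ, g y / ENNReal.ofReal (dist x y ^ n)) ≤
      ∫⁻ y in (ball a (2*r))ᶜ, (ENNReal.ofReal (2^n) * ENNReal.ofReal n) *
        (g y * ∫⁻ s in Ioi (2*r), (Ioi (dist y a)).indicator h s) := by
    refine lintegral_mono_ae ((ae_restrict_iff' measurableSet_ball.compl).2
      (Filter.Eventually.of_forall fun y hy => ?_))
    have hdya : 2*r ≤ dist y a := not_lt.1 (by simpa [mem_ball] using hy)
    have hdya0 : 0 < dist y a := lt_of_lt_of_le hr2 hdya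
    have hxa : dist x a < r := mem_ball.1 hx
    have hxy : dist y a ≤ 2 * dist x y := by
      have ht := dist_triangle y x a
      rw [dist_comm y x] at ht
      linarith
    have hdxy0 : 0 < dist x y := by linarith
    have h2 : (0:ℝ) < dist y a ^ n := pow_pos hdya0 n
    have h3 : (0:ℝ) < dist x y ^ n := pow_pos hdxy0 n
    have hle : dist y a ^ n ≤ 2^n * dist x y ^ n := by
      calc dist y a ^ n ≤ (2 * dist x y)^n := pow_le_pow_left₀ dist_nonneg hxy n
        _ = 2^n * dist x y ^ n := mul_pow _ _ _
    have hinv : (dist x y ^ n)⁻¹ ≤ 2 ^ n * (dist y a ^ n)⁻¹ := by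
      calc (dist x y ^ n)⁻¹ = 2^n * (2^n * dist x y ^ n)⁻¹ := by field_simp
        _ ≤ 2^n * (dist y a ^ n)⁻¹ := by gcongr
    have e1 : (ENNReal.ofReal (dist x y ^ n))⁻¹ ≤
        ENNReal.ofReal (2^n) * (ENNReal.ofReal (dist y a ^ n))⁻¹ := by
      rw [← ENNReal.ofReal_inv_of_pos h3, ← ENNReal.ofReal_inv_of_pos h2,
        ← ENNReal.ofReal_mul (by positivity)]
      exact ENNReal.ofReal_le_ofReal hinv
    have e2 : (ENNReal.ofReal (dist y a ^ n))⁻¹ =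
        ENNReal.ofReal n * ∫⁻ s in Ioi (dist y a), h s := (lint_Ioi_rpow hn hdya0).symm
    have e3 : ∫⁻ s in Ioi (2*r), (Ioi (dist y a)).indicator h s = ∫⁻ s in Ioi (dist y a), h s := by
      rw [lintegral_indicator measurableSet_Ioi, Measure.restrict_restrict measurableSet_Ioi,
        inter_eq_self_of_subset_left (Ioi_subset_Ioi hdya)]
    calc g y / ENNReal.ofReal (dist x y ^ n) = g y * (ENNReal.ofReal (dist x y ^ n))⁻¹ :=
          div_eq_mul_inv _ _
      _ ≤ g y * (ENNReal.ofReal (2^n) * (ENNReal.ofReal n * ∫⁻ s in Ioi (dist y a), h s)) := by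
          refine mul_le_mul_right (e1.trans ?_) _
          rw [e2, ← mul_assoc, mul_assoc]
      _ = (ENNReal.ofReal (2^n) * ENNReal.ofReal n) *
            (g y * ∫⁻ s in Ioi (2*r), (Ioi (dist y a)).indicator h s) := by
          rw [e3]; ring
  -- Step 4: pull out the constant
  have step4 : (∫⁻ y in (ball a (2*r))ᶜ, (ENNReal.ofReal (2^n) * ENNReal.ofReal n) *
        (g y * ∫⁻ s in Ioi (2*r), (Ioi (dist y a)).indicator h s)) =
      (ENNReal.ofReal (2^n) * ENNReal.ofReal n) *
        ∫⁻ y in (ball a (2*r))ᶜ, g y * ∫⁻ s in Ioi (2*r), (Ioi (dist y a)).indicator h s :=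
    lintegral_const_mul' _ _ (ENNReal.mul_ne_top ENNReal.ofReal_ne_top ENNReal.ofReal_ne_top)
  -- Step 5: Tonelli
  have hswap : (∫⁻ y in (ball a (2*r))ᶜ, g y * ∫⁻ s in Ioi (2*r), (Ioi (dist y a)).indicator h s)
      = ∫⁻ s in Ioi (2*r), ∫⁻ y in (ball a (2*r))ᶜ, g y * (Ioi (dist y a)).indicator h s := by
    have hpt : ∀ y, g y * ∫⁻ s in Ioi (2*r), (Ioi (dist y a)).indicator h s =
        ∫⁻ s in Ioi (2*r), g y * (Ioi (dist y a)).indicator h s := fun y =>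
      (lintegral_const_mul' _ _ ENNReal.ofReal_ne_top).symm
    simp_rw [hpt]
    refine lintegral_lintegral_swap ?_
    have hset : MeasurableSet {p : EuclideanSpace ℝ (Fin n) × ℝ | dist p.1 a < p.2} :=
      measurableSet_lt (measurable_fst.dist measurable_const) measurable_snd
    have hh : Measurable h := by fun_prop
    have huncurry : (Function.uncurry fun y s => g y * (Ioi (dist y a)).indicator h s) =
        fun p : EuclideanSpace ℝ (Fin n) × ℝ => g p.1 *
          ({p : EuclideanSpace ℝ (Fin n) × ℝ | dist p.1 a < p.2}.indicator (fun q => h q.2) p) := by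
      funext p
      simp [Function.uncurry, Set.indicator_apply, Set.mem_Ioi]
    rw [huncurry]
    exact ((hf.abs.ennreal_ofReal.comp measurable_fst).mul
      ((hh.comp measurable_snd).indicator hset)).aemeasurable
  -- Step 6: bound the inner integral
  have inner_bound : ∀ s : ℝ, 2*r < s →
      (∫⁻ y in (ball a (2*r))ᶜ, g y * (Ioi (dist y a)).indicator h s) ≤
        ENNReal.ofReal CA * volume (ball (0 : EuclideanSpace ℝ (Fin n)) 1) *
          ((wSet w (ball a s))⁻¹ * (∫⁻ y in ball a s, g y * ENNReal.ofReal (w y)) *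
            ENNReal.ofReal s⁻¹) := by
    intro s hs
    have hs0 : 0 < s := lt_trans hr2 hs
    have hpt : ∀ y, g y * (Ioi (dist y a)).indicator h s =
        (ball a s).indicator (fun y => g y * h s) y := by
      intro y
      by_cases hy : dist y a < s
      · rw [Set.indicator_of_mem (Set.mem_Ioi.2 hy), Set.indicator_of_mem (mem_ball.2 hy)]
      · rw [Set.indicator_of_notMem (by simpa [Set.mem_Ioi] using hy),
          Set.indicator_of_notMem (by simpa [mem_ball] using hy), mul_zero]
    have hsn : ENNReal.ofReal (s ^ n) * h s = ENNReal.ofReal s⁻¹ := by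
      rw [hhdef, ← ENNReal.ofReal_mul (by positivity)]
      congr 1
      rw [← Real.rpow_natCast s n, ← Real.rpow_add hs0,
        show (n:ℝ) + (-(n:ℝ) - 1) = -1 by ring, Real.rpow_neg_one]
    calc (∫⁻ y in (ball a (2*r))ᶜ, g y * (Ioi (dist y a)).indicator h s)
        = ∫⁻ y in (ball a (2*r))ᶜ, (ball a s).indicator (fun y => g y * h s) y := by
          simp_rw [hpt]
      _ = ∫⁻ y in ball a s ∩ (ball a (2*r))ᶜ, g y * h s := by
          rw [lintegral_indicator measurableSet_ball,
            Measure.restrict_restrict measurableSet_ball]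
      _ ≤ ∫⁻ y in ball a s, g y * h s :=
          lintegral_mono' (Measure.restrict_mono inter_subset_left le_rfl) le_rfl
      _ = (∫⁻ y in ball a s, g y) * h s := lintegral_mul_const' _ _ ENNReal.ofReal_ne_top
      _ ≤ (Sb w a s * ∫⁻ y in ball a s, g y * ENNReal.ofReal (w y)) * h s :=
          mul_le_mul_left (U_le w hm hpos hf a s) _
      _ ≤ (((wSet w (ball a s))⁻¹ * (ENNReal.ofReal CA * volume (ball a s))) *
            (∫⁻ y in ball a s, g y * ENNReal.ofReal (w y))) * h s := by
          gcongr
          exact Sb_le w a hs0 (wSet_ball_pos w hm hpos a hs0).ne'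
            (wSet_ball_lt_top w hli a s).ne (hkey a s hs0)
      _ = ENNReal.ofReal CA * volume (ball (0 : EuclideanSpace ℝ (Fin n)) 1) *
          ((wSet w (ball a s))⁻¹ * (∫⁻ y in ball a s, g y * ENNReal.ofReal (w y)) *
            ENNReal.ofReal s⁻¹) := by
          rw [vol_ball_eq a hs0, ← hsn]; ring
  -- assemble
  calc (∫⁻ y in (ball a (2*r))ᶜ, g y / ENNReal.ofReal (dist x y ^ n))
      ≤ (ENNReal.ofReal (2^n) * ENNReal.ofReal n) *
          ∫⁻ s in Ioi (2*r), ∫⁻ y in (ball a (2*r))ᶜ, g y * (Ioi (dist y a)).indicator h s := by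
        rw [← hswap, ← step4]; exact step2
    _ ≤ (ENNReal.ofReal (2^n) * ENNReal.ofReal n) *
          ∫⁻ s in Ioi (2*r), ENNReal.ofReal CA *
            volume (ball (0 : EuclideanSpace ℝ (Fin n)) 1) *
            ((wSet w (ball a s))⁻¹ * (∫⁻ y in ball a s, g y * ENNReal.ofReal (w y)) *
              ENNReal.ofReal s⁻¹) := by
        refine mul_le_mul_right (lintegral_mono_ae ((ae_restrict_iff' measurableSet_Ioi).2
          (Filter.Eventually.of_forall fun s hs => inner_bound s hs))) _
    _ = ENNReal.ofReal (2 ^ n * n * CA) * volume (ball (0 : EuclideanSpace ℝ (Fin n)) 1) *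
          ∫⁻ s in Ioi (2*r), (wSet w (ball a s))⁻¹ *
            (∫⁻ y in ball a s, ENNReal.ofReal |f y| * ENNReal.ofReal (w y)) *
            ENNReal.ofReal s⁻¹ := by
        rw [lintegral_const_mul' _ _ (ENNReal.mul_ne_top ENNReal.ofReal_ne_top
          measure_ball_lt_top.ne)]
        rw [ENNReal.ofReal_mul (by positivity), ENNReal.ofReal_mul (by positivity)]
        ring

end S18

end

noncomputable section
namespace S18
variable {n : ℕ}

lemma wLp_one_eq (w f : EuclideanSpace ℝ (Fin n) → ℝ) (Ω : Set (EuclideanSpace ℝ (Fin n))) :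
    wLp 1 w f Ω = ∫⁻ x in Ω, ENNReal.ofReal |f x| * ENNReal.ofReal (w x) := by
  unfold wLp; norm_num

lemma wWeakLp_one_eq (w F : EuclideanSpace ℝ (Fin n) → ℝ) (Ω : Set (EuclideanSpace ℝ (Fin n))) :
    wWeakLp 1 w F Ω =
      ⨆ γ : Set.Ioi (0:ℝ), ENNReal.ofReal γ.1 * wSet w {x | x ∈ Ω ∧ γ.1 < |F x|} := by
  unfold wWeakLp; norm_num

end S18

/-- Let `w ∈ A_1`, and let `T` be an additive operator that is bounded from
`L^{1,w}` to `WL^{1,w}` and satisfies `|Tf(x)| ≤ A·∫ |f(y)|/|x−y|^n dy` for `x` outside the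
support of `f`. Then there is `C > 0`, independent of `f`, `a`, `r`, with
`‖Tf‖_{WL^{1,w}(B(a,r))} ≤ C·w(B(a,r))·∫_r^∞ w(B(a,s))⁻¹‖f‖_{L^{1,w}(B(a,s))} ds/s`
for every `a ∈ ℝⁿ`, `r > 0` and `f ∈ L^{1,w}_loc`. -/
theorem statement18 {n : ℕ}
    (w : EuclideanSpace ℝ (Fin n) → ℝ) (hw : IsWeight w) (hA1 : MuckA1 w)
    (T : (EuclideanSpace ℝ (Fin n) → ℝ) → (EuclideanSpace ℝ (Fin n) → ℝ))
    (hadd : ∀ f g, T (f + g) = T f + T g)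
    (C₀ : ℝ) (hC₀ : 0 < C₀)
    (hbdd : ∀ f : EuclideanSpace ℝ (Fin n) → ℝ, Measurable f →
      wLp 1 w f Set.univ < ⊤ →
      wWeakLp 1 w (T f) Set.univ ≤ ENNReal.ofReal C₀ * wLp 1 w f Set.univ)
    (A : ℝ) (hA : 0 < A)
    (hker : ∀ (f : EuclideanSpace ℝ (Fin n) → ℝ) (x : EuclideanSpace ℝ (Fin n)),
      x ∉ tsupport f →
      ENNReal.ofReal |T f x| ≤
        ENNReal.ofReal A * ∫⁻ y, ENNReal.ofReal |f y| / ENNReal.ofReal (dist x y ^ n)) :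
    ∃ C : ℝ, 0 < C ∧
      ∀ (a : EuclideanSpace ℝ (Fin n)) (r : ℝ) (f : EuclideanSpace ℝ (Fin n) → ℝ),
        0 < r → MemLocWLp 1 w f →
        wWeakLp 1 w (T f) (ball a r) ≤
          ENNReal.ofReal C * wSet w (ball a r) *
            ∫⁻ s in Set.Ioi r,
              (wSet w (ball a s))⁻¹ * wLp 1 w f (ball a s) * ENNReal.ofReal s⁻¹ := by
  classical
  obtain ⟨hwm, hwnn, hwli, hwpos⟩ := hw
  obtain ⟨CA, hCA0, hCAball⟩ := hA1
  have hkey : ∀ (a : EuclideanSpace ℝ (Fin n)) (r : ℝ), 0 < r →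
      ((volume (ball a r))⁻¹ * ∫⁻ x in ball a r, ENNReal.ofReal (w x)) * S18.Sb w a r ≤
        ENNReal.ofReal CA := hCAball
  set c0R : ℝ := (volume (ball (0 : EuclideanSpace ℝ (Fin n)) 1)).toReal with hc0R
  have hc0R0 : 0 ≤ c0R := ENNReal.toReal_nonneg
  have hc0 : volume (ball (0 : EuclideanSpace ℝ (Fin n)) 1) = ENNReal.ofReal c0R :=
    (ENNReal.ofReal_toReal measure_ball_lt_top.ne).symm
  refine ⟨4 * (C₀ * (CA * 4 ^ n)) + 2 * (A * (2 ^ n * n * CA * c0R)) + 1, by positivity, ?_⟩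
  intro a r f hr hf
  obtain ⟨hfm, hfloc⟩ := hf
  have hr2 : 0 < 2 * r := by linarith
  have hr4 : 0 < 4 * r := by linarith
  set f₁ : EuclideanSpace ℝ (Fin n) → ℝ := (ball a (2*r)).indicator f with hf₁
  set f₂ : EuclideanSpace ℝ (Fin n) → ℝ := (ball a (2*r))ᶜ.indicator f with hf₂
  have hsplit : T f = fun x => T f₁ x + T f₂ x := by
    have h := hadd f₁ f₂
    have hff : f₁ + f₂ = f := by
      funext y
      by_cases hy : y ∈ ball a (2*r) <;> simp [hf₁, hf₂, Pi.add_apply, hy]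
    rw [hff] at h
    rw [h]; rfl
  set I : ℝ≥0∞ :=
    ∫⁻ s in Ioi r, (wSet w (ball a s))⁻¹ * wLp 1 w f (ball a s) * ENNReal.ofReal s⁻¹ with hI
  set Wr := wSet w (ball a r) with hWr
  set W4 := wSet w (ball a (4*r)) with hW4d
  -- near part boundedness
  have hf1m : Measurable f₁ := hfm.indicator measurableSet_ball
  have hf1norm : wLp 1 w f₁ univ = wLp 1 w f (ball a (2*r)) := by
    rw [S18.wLp_one_eq, S18.wLp_one_eq, Measure.restrict_univ,
      ← lintegral_indicator measurableSet_ball]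
    congr 1; funext y
    by_cases hy : y ∈ ball a (2*r)
    · simp [hf₁, hy, Set.indicator_of_mem]
    · simp [hf₁, hy, Set.indicator_of_notMem]
  have hN1 : wWeakLp 1 w (T f₁) (ball a r) ≤ ENNReal.ofReal C₀ * wLp 1 w f (ball a (2*r)) := by
    have hmono : wWeakLp 1 w (T f₁) (ball a r) ≤ wWeakLp 1 w (T f₁) univ := by
      rw [S18.wWeakLp_one_eq, S18.wWeakLp_one_eq]
      refine iSup_mono fun γ => mul_le_mul_right (S18.wSet_mono w ?_) _
      intro x hx
      exact ⟨mem_univ x, hx.2⟩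
    refine hmono.trans ?_
    rw [← hf1norm]
    exact hbdd f₁ hf1m (by rw [hf1norm]; exact hfloc a (2*r) hr2)
  -- lower bound for I
  have hW4_0 : W4 ≠ 0 := (S18.wSet_ball_pos w hwm hwpos a hr4).ne'
  have hW4_t : W4 ≠ ⊤ := (S18.wSet_ball_lt_top w hwli a (4*r)).ne
  have hconsthalf : ENNReal.ofReal (4*r)⁻¹ * volume (Ioc (2*r) (4*r)) = 2⁻¹ := by
    rw [Real.volume_Ioc, ← ENNReal.ofReal_mul (by positivity),
      show (4*r)⁻¹ * (4*r - 2*r) = (2:ℝ)⁻¹ by field_simp; ring,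
      ENNReal.ofReal_inv_of_pos (by norm_num : (0:ℝ) < 2), ENNReal.ofReal_ofNat]
  have hIlow : W4⁻¹ * wLp 1 w f (ball a (2*r)) * 2⁻¹ ≤ I := by
    have hptwise : ∀ s ∈ Ioc (2*r) (4*r),
        W4⁻¹ * wLp 1 w f (ball a (2*r)) * ENNReal.ofReal (4*r)⁻¹ ≤
          (wSet w (ball a s))⁻¹ * wLp 1 w f (ball a s) * ENNReal.ofReal s⁻¹ := by
      intro s hs
      obtain ⟨hs1, hs2⟩ := hs
      have hs0 : 0 < s := lt_trans hr2 hs1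
      refine mul_le_mul' (mul_le_mul' ?_ ?_) ?_
      · exact ENNReal.inv_le_inv' (S18.wSet_mono w (ball_subset_ball hs2))
      · rw [S18.wLp_one_eq, S18.wLp_one_eq]
        exact lintegral_mono' (Measure.restrict_mono (ball_subset_ball hs1.le) le_rfl) le_rfl
      · exact ENNReal.ofReal_le_ofReal (inv_anti₀ hs0 hs2)
    calc W4⁻¹ * wLp 1 w f (ball a (2*r)) * 2⁻¹
        = ∫⁻ s in Ioc (2*r) (4*r),
            W4⁻¹ * wLp 1 w f (ball a (2*r)) * ENNReal.ofReal (4*r)⁻¹ := by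
          conv_rhs => rw [setLIntegral_const, mul_assoc, hconsthalf]
      _ ≤ ∫⁻ s in Ioc (2*r) (4*r),
            (wSet w (ball a s))⁻¹ * wLp 1 w f (ball a s) * ENNReal.ofReal s⁻¹ :=
          lintegral_mono_ae ((ae_restrict_iff' measurableSet_Ioc).2
            (Filter.Eventually.of_forall hptwise))
      _ ≤ I := by
          rw [hI]
          refine lintegral_mono' (Measure.restrict_mono ?_ le_rfl) le_rfl
          intro s hs
          exact mem_Ioi.2 (by have := hs.1; linarith)
  have hL2 : wLp 1 w f (ball a (2*r)) ≤ 2 * W4 * I := by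
    have e : wLp 1 w f (ball a (2*r)) =
        2 * W4 * (W4⁻¹ * wLp 1 w f (ball a (2*r)) * 2⁻¹) := by
      have h2 : (2:ℝ≥0∞) * 2⁻¹ = 1 := ENNReal.mul_inv_cancel (by norm_num) (by norm_num)
      have hW : W4 * W4⁻¹ = 1 := ENNReal.mul_inv_cancel hW4_0 hW4_t
      calc wLp 1 w f (ball a (2*r))
          = (W4 * W4⁻¹) * ((2:ℝ≥0∞) * 2⁻¹) * wLp 1 w f (ball a (2*r)) := by
            rw [h2, hW, one_mul, one_mul]
        _ = 2 * W4 * (W4⁻¹ * wLp 1 w f (ball a (2*r)) * 2⁻¹) := by ring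
    rw [e]
    exact mul_le_mul_right hIlow _
  have hdbl : W4 ≤ ENNReal.ofReal CA * ENNReal.ofReal (4^n) * Wr :=
    S18.doubling w hwm hwpos hkey a hr
  -- T kills zero
  have hT0 : T 0 = 0 := by
    have h := hadd 0 0
    rw [add_zero] at h
    funext x
    have hx := congrFun h x
    simp only [Pi.add_apply] at hx
    have : T 0 x = 0 := by linarith
    simpa using this
  -- far part pointwise bound
  have hfar : ∀ x ∈ ball a r, ENNReal.ofReal |T f₂ x| ≤
      ENNReal.ofReal A * (ENNReal.ofReal (2^n * n * CA) *
        volume (ball (0 : EuclideanSpace ℝ (Fin n)) 1)) * I := by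
    intro x hx
    rcases Nat.eq_zero_or_pos n with hn0 | hn
    · subst hn0
      have hball : ball a (2*r) = univ := by
        ext y
        simp only [mem_ball, mem_univ, iff_true]
        have hy : y = a := by ext i; exact i.elim0
        rw [hy, dist_self]; linarith
      have hf2z : f₂ = 0 := by
        funext y
        simp [hf₂, hball]
      rw [hf2z, hT0]
      simp
    · have hxnot : x ∉ tsupport f₂ := by
        intro hmem
        have hsupp : tsupport f₂ ⊆ (ball a (2*r))ᶜ :=
          closure_minimal Set.support_indicator_subset isOpen_ball.isClosed_compl
        exact (hsupp hmem) (ball_subset_ball (by linarith) hx)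
      refine (hker f₂ x hxnot).trans ?_
      refine (mul_le_mul_right
        (S18.far_bound w hwm hwpos hwli hkey hfm hn a hr hx) _).trans ?_
      have hIeq : (∫⁻ s in Ioi (2*r), (wSet w (ball a s))⁻¹ *
          (∫⁻ y in ball a s, ENNReal.ofReal |f y| * ENNReal.ofReal (w y)) *
          ENNReal.ofReal s⁻¹) ≤ I := by
        rw [hI]
        simp_rw [S18.wLp_one_eq]
        exact lintegral_mono' (Measure.restrict_mono (Ioi_subset_Ioi (by linarith)) le_rfl)
          le_rfl
      calc ENNReal.ofReal A * (ENNReal.ofReal (2^n * n * CA) *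
            volume (ball (0 : EuclideanSpace ℝ (Fin n)) 1) *
            ∫⁻ s in Ioi (2*r), (wSet w (ball a s))⁻¹ *
              (∫⁻ y in ball a s, ENNReal.ofReal |f y| * ENNReal.ofReal (w y)) *
              ENNReal.ofReal s⁻¹)
          = ENNReal.ofReal A * (ENNReal.ofReal (2^n * n * CA) *
              volume (ball (0 : EuclideanSpace ℝ (Fin n)) 1)) *
              ∫⁻ s in Ioi (2*r), (wSet w (ball a s))⁻¹ *
                (∫⁻ y in ball a s, ENNReal.ofReal |f y| * ENNReal.ofReal (w y)) *
                ENNReal.ofReal s⁻¹ := by ring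
        _ ≤ ENNReal.ofReal A * (ENNReal.ofReal (2^n * n * CA) *
              volume (ball (0 : EuclideanSpace ℝ (Fin n)) 1)) * I :=
            mul_le_mul_right hIeq _
  -- far part weak norm
  have hN2 : wWeakLp 1 w (T f₂) (ball a r) ≤
      ENNReal.ofReal A * (ENNReal.ofReal (2^n * n * CA) *
        volume (ball (0 : EuclideanSpace ℝ (Fin n)) 1)) * I * Wr := by
    rw [S18.wWeakLp_one_eq]
    refine iSup_le fun γ => ?_
    by_cases hemp : {x | x ∈ ball a r ∧ γ.1 < |T f₂ x|} = ∅
    · rw [hemp]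
      simp [wSet]
    · obtain ⟨x, hx1, hx2⟩ := Set.nonempty_iff_ne_empty.2 hemp
      have h1 : ENNReal.ofReal γ.1 ≤ ENNReal.ofReal A * (ENNReal.ofReal (2^n * n * CA) *
          volume (ball (0 : EuclideanSpace ℝ (Fin n)) 1)) * I :=
        (ENNReal.ofReal_le_ofReal hx2.le).trans (hfar x hx1)
      have h2 : wSet w {x | x ∈ ball a r ∧ γ.1 < |T f₂ x|} ≤ Wr :=
        S18.wSet_mono w fun x hx => hx.1
      exact mul_le_mul' h1 h2
  -- splitting the weak norm
  have hsplitN : wWeakLp 1 w (T f) (ball a r) ≤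
      2 * wWeakLp 1 w (T f₁) (ball a r) + 2 * wWeakLp 1 w (T f₂) (ball a r) := by
    rw [S18.wWeakLp_one_eq]
    refine iSup_le fun γp => ?_
    obtain ⟨γ, hγ⟩ := γp
    have hγ0 : (0:ℝ) < γ := hγ
    have hhalf : (0:ℝ) < γ/2 := by linarith
    have hsubset : {x | x ∈ ball a r ∧ γ < |T f x|} ⊆
        {x | x ∈ ball a r ∧ γ/2 < |T f₁ x|} ∪ {x | x ∈ ball a r ∧ γ/2 < |T f₂ x|} := by
      intro x hx
      obtain ⟨hx1, hx2⟩ := hx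
      have habs : |T f x| ≤ |T f₁ x| + |T f₂ x| := by
        rw [congrFun hsplit x]
        exact abs_add_le _ _
      by_cases h1 : γ/2 < |T f₁ x|
      · exact Or.inl ⟨hx1, h1⟩
      · refine Or.inr ⟨hx1, ?_⟩
        push_neg at h1
        linarith
    have hofReal : ENNReal.ofReal γ = 2 * ENNReal.ofReal (γ/2) := by
      conv_lhs => rw [show γ = 2 * (γ/2) by ring]
      rw [ENNReal.ofReal_mul (by norm_num)]
      norm_num
    calc ENNReal.ofReal γ * wSet w {x | x ∈ ball a r ∧ γ < |T f x|}
        ≤ ENNReal.ofReal γ * (wSet w {x | x ∈ ball a r ∧ γ/2 < |T f₁ x|} +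
            wSet w {x | x ∈ ball a r ∧ γ/2 < |T f₂ x|}) :=
          mul_le_mul_right ((S18.wSet_mono w hsubset).trans (S18.wSet_union_le w _ _)) _
      _ = 2 * (ENNReal.ofReal (γ/2) * wSet w {x | x ∈ ball a r ∧ γ/2 < |T f₁ x|}) +
          2 * (ENNReal.ofReal (γ/2) * wSet w {x | x ∈ ball a r ∧ γ/2 < |T f₂ x|}) := by
          rw [hofReal]; ring
      _ ≤ 2 * wWeakLp 1 w (T f₁) (ball a r) + 2 * wWeakLp 1 w (T f₂) (ball a r) := by
          gcongr
          · rw [S18.wWeakLp_one_eq]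
            exact le_iSup_of_le ⟨γ/2, hhalf⟩ le_rfl
          · rw [S18.wWeakLp_one_eq]
            exact le_iSup_of_le ⟨γ/2, hhalf⟩ le_rfl
  -- combine
  calc wWeakLp 1 w (T f) (ball a r)
      ≤ 2 * wWeakLp 1 w (T f₁) (ball a r) + 2 * wWeakLp 1 w (T f₂) (ball a r) := hsplitN
    _ ≤ 2 * (ENNReal.ofReal C₀ * (2 * (ENNReal.ofReal CA * ENNReal.ofReal (4^n) * Wr) * I)) +
        2 * (ENNReal.ofReal A * (ENNReal.ofReal (2^n * n * CA) *
          volume (ball (0 : EuclideanSpace ℝ (Fin n)) 1)) * I * Wr) := by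
        refine add_le_add (mul_le_mul_right ?_ 2) (mul_le_mul_right hN2 2)
        exact hN1.trans (mul_le_mul_right
          (hL2.trans (mul_le_mul_left (mul_le_mul_right hdbl 2) I)) _)
    _ = (4 * ENNReal.ofReal C₀ * ENNReal.ofReal CA * ENNReal.ofReal (4^n) +
         2 * ENNReal.ofReal A * ENNReal.ofReal (2^n * n * CA) * ENNReal.ofReal c0R) *
          Wr * I := by
        rw [hc0]; ring
    _ ≤ ENNReal.ofReal (4 * (C₀ * (CA * 4 ^ n)) + 2 * (A * (2 ^ n * n * CA * c0R)) + 1) *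
          Wr * I := by
        gcongr
        rw [show (4:ℝ≥0∞) = ENNReal.ofReal (4:ℝ) by norm_num,
          show (2:ℝ≥0∞) = ENNReal.ofReal (2:ℝ) by norm_num,
          ← ENNReal.ofReal_mul (by norm_num), ← ENNReal.ofReal_mul (by positivity),
          ← ENNReal.ofReal_mul (by positivity), ← ENNReal.ofReal_mul (by norm_num),
          ← ENNReal.ofReal_mul (by positivity), ← ENNReal.ofReal_mul (by positivity),
          ← ENNReal.ofReal_add (by positivity) (by positivity)]
        refine ENNReal.ofReal_le_ofReal ?_
        nlinarith [sq_nonneg (1:ℝ)]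
end
end

section
/- Let 1 < p < ∞ and w ∈ A_p. Let T be an operator mapping measurable functions on ℝⁿ to measurable functions on ℝⁿ such that: (i) T is additive, T(f+g) = Tf + Tg; (ii) there is C₀ > 0 with ‖Tf‖_{L^{p,w}(ℝⁿ)} ≤ C₀‖f‖_{L^{p,w}(ℝⁿ)} for every f ∈ L^{p,w}; and (iii) there is A > 0 such that |Tf(x)| ≤ A·∫_{ℝⁿ} |f(y)|/|x−y|^n dy for every f and every x outside the support of f. Suppose ψ₁ and ψ₂ are positive functions on ℝⁿ × (0,∞) for which there is a constant C > 0, independent of a and r, with ∫_r^∞ ψ₁(a,t) dt/t ≤ C·ψ₂(a,r) for every (a,r) ∈ ℝⁿ × (0,∞). Then T is bounded from M^{p,w}_{ψ₁} to M^{p,w}_{ψ₂}: there is C' > 0 such that ‖Tf‖_{M^{p,w}_{ψ₂}} ≤ C'·‖f‖_{M^{p,w}_{ψ₁}} for every f ∈ M^{p,w}_{ψ₁}. -/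
open MeasureTheory Metric Set
open scoped ENNReal

section Aux
open MeasureTheory Metric Set
open scoped ENNReal

variable {n : ℕ}

local notation "E" => EuclideanSpace ℝ (Fin n)

lemma wSet_lt_top {w : E → ℝ} (hw : IsWeight w) (a : E) (r : ℝ) :
    wSet w (ball a r) < ⊤ := by
  obtain ⟨hmeas, hnn, hloc, -⟩ := hw
  have hint : IntegrableOn w (closedBall a r) volume :=
    hloc.integrableOn_isCompact (isCompact_closedBall a r)
  have : wSet w (ball a r) ≤ ∫⁻ x in closedBall a r, ‖w x‖₊ := by
    refine le_trans (lintegral_mono_set ball_subset_closedBall) (lintegral_mono fun x => ?_)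
    rw [← enorm_eq_nnnorm, Real.enorm_eq_ofReal (hnn x)]
  exact lt_of_le_of_lt this hint.2
  
lemma wSet_pos {w : E → ℝ} (hw : IsWeight w) (a : E) {r : ℝ} (hr : 0 < r) :
    0 < wSet w (ball a r) := by
  obtain ⟨hmeas, hnn, hloc, hpos⟩ := hw
  rw [pos_iff_ne_zero]
  intro h0
  have := (lintegral_eq_zero_iff (by fun_prop)).mp h0
  have h2 : ∀ᵐ x ∂(volume.restrict (ball a r)), 0 < w x := ae_restrict_of_ae hpos
  have h3 : ∀ᵐ _x ∂(volume.restrict (ball a r)), False := by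
    filter_upwards [this, h2] with x hx1 hx2
    simp only [Pi.zero_apply, ENNReal.ofReal_eq_zero] at hx1
    linarith
  rw [ae_iff] at h3
  simp only [not_false_iff, setOf_true, Measure.restrict_apply_univ] at h3
  exact (measure_ball_pos volume a hr).ne' h3

lemma wLp_mono_set {p : ℝ} (hp : 0 < p) {w f : E → ℝ} {s t : Set E} (hst : s ⊆ t) :
    wLp p w f s ≤ wLp p w f t :=
  ENNReal.rpow_le_rpow (lintegral_mono_set hst) (by positivity)

end Aux
section Aux2
open MeasureTheory Metric Set
open scoped ENNReal

variable {n : ℕ}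

local notation "E" => EuclideanSpace ℝ (Fin n)

lemma vol_ball (a : E) {t : ℝ} (ht : 0 < t) :
    volume (ball a t) = ENNReal.ofReal (t ^ n) * volume (ball (0 : E) 1) := by
  rw [Measure.addHaar_ball_of_pos volume a ht, finrank_euclideanSpace_fin]

lemma cancel_aux {c x X M : ℝ≥0∞} (hc0 : c ≠ 0) (hct : c ≠ ⊤) (hx0 : x ≠ 0) (hxt : x ≠ ⊤)
    (h : c⁻¹ * x⁻¹ * X ≤ M) : X ≤ c * x * M := by
  calc X = (c * c⁻¹) * ((x * x⁻¹) * X) := by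
        rw [ENNReal.mul_inv_cancel hc0 hct, ENNReal.mul_inv_cancel hx0 hxt, one_mul, one_mul]
    _ = c * x * (c⁻¹ * x⁻¹ * X) := by ring
    _ ≤ c * x * M := mul_le_mul_right h _

lemma morrey_pointwise {p : ℝ} (hp : 1 < p) {w f : E → ℝ} (hw : IsWeight w)
    {ψ : E → ℝ → ℝ} (a : E) {t : ℝ} (ht : 0 < t) (hψ : 0 < ψ a t) :
    wLp p w f (ball a t) ≤
      ENNReal.ofReal (ψ a t) * wSet w (ball a t) ^ (1 / p) * morreyNorm p w ψ f := by
  have hν0 : wSet w (ball a t) ≠ 0 := (wSet_pos hw a ht).ne'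
  have hνt : wSet w (ball a t) ≠ ⊤ := (wSet_lt_top hw a t).ne
  have key : (ENNReal.ofReal (ψ a t))⁻¹ * wSet w (ball a t) ^ (-(1 / p)) *
      wLp p w f (ball a t) ≤ morreyNorm p w ψ f :=
    le_iSup_of_le a (le_iSup_of_le ⟨t, ht⟩ le_rfl)
  rw [ENNReal.rpow_neg] at key
  have h1p : (0:ℝ) ≤ 1 / p := le_of_lt (one_div_pos.mpr (lt_trans zero_lt_one hp))
  refine cancel_aux (by simpa using hψ) ENNReal.ofReal_ne_top ?_ ?_ key
  · exact (ENNReal.rpow_pos (pos_iff_ne_zero.mpr hν0) hνt).ne'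
  · exact ENNReal.rpow_ne_top_of_nonneg h1p hνt

end Aux2
section Aux3
open MeasureTheory Metric Set
open scoped ENNReal

variable {n : ℕ}

local notation "E" => EuclideanSpace ℝ (Fin n)

lemma holder_Ap {p : ℝ} (hp : 1 < p) {w f : E → ℝ} (hw : IsWeight w) (hf : Measurable f)
    {CA : ℝ}
    (hAp : ∀ (a : E) (r : ℝ), 0 < r →
      ((volume (ball a r))⁻¹ * ∫⁻ x in ball a r, ENNReal.ofReal (w x)) *
        ((volume (ball a r))⁻¹ *
          ∫⁻ x in ball a r, ENNReal.ofReal (w x ^ (-(1 / (p - 1))))) ^ (p - 1) ≤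
        ENNReal.ofReal CA)
    (a : E) {t : ℝ} (ht : 0 < t) :
    ∫⁻ y in ball a t, ENNReal.ofReal |f y| ≤
      ENNReal.ofReal CA ^ (1 / p) * volume (ball a t) * wSet w (ball a t) ^ (-(1 / p)) *
        wLp p w f (ball a t) := by
  have hp0 : (0:ℝ) < p := lt_trans zero_lt_one hp
  have hp1 : (0:ℝ) < p - 1 := by linarith
  have hq := Real.HolderConjugate.conjExponent hp
  set q : ℝ := p / (p - 1) with hqdef
  set μ := volume.restrict (ball a t) with hμ
  set W : E → ℝ≥0∞ := fun x => ENNReal.ofReal (w x) with hW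
  set F : E → ℝ≥0∞ := fun y => ENNReal.ofReal |f y| with hF
  set I : ℝ≥0∞ := ∫⁻ x in ball a t, ENNReal.ofReal (w x ^ (-(1 / (p - 1)))) with hI
  set V : ℝ≥0∞ := volume (ball a t) with hV
  set ν : ℝ≥0∞ := wSet w (ball a t) with hν
  have hWmeas : Measurable W := ENNReal.measurable_ofReal.comp hw.1
  have hWpos : ∀ᵐ x ∂μ, 0 < w x := ae_restrict_of_ae hw.2.2.2
  have hV0 : V ≠ 0 := (measure_ball_pos volume a ht).ne'
  have hVt : V ≠ ⊤ := measure_ball_lt_top.ne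
  have hν0 : ν ≠ 0 := (wSet_pos hw a ht).ne'
  have hνt : ν ≠ ⊤ := (wSet_lt_top hw a t).ne
  -- Hölder
  have heq : ∫⁻ y, F y ∂μ =
      ∫⁻ y, ((fun y => F y * W y ^ (1/p)) * fun y => W y ^ (-(1/p))) y ∂μ := by
    refine lintegral_congr_ae ?_
    filter_upwards [hWpos] with x hx
    have hW0 : W x ≠ 0 := by simp [hW, hx, ENNReal.ofReal_eq_zero, not_le]
    have hWt : W x ≠ ⊤ := ENNReal.ofReal_ne_top
    simp only [Pi.mul_apply]
    rw [mul_assoc, ← ENNReal.rpow_add _ _ hW0 hWt, add_neg_cancel, ENNReal.rpow_zero, mul_one]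
  have hm1 : AEMeasurable (fun y => F y * W y ^ (1/p)) μ := by fun_prop
  have hm2 : AEMeasurable (fun y : E => W y ^ (-(1/p))) μ := by fun_prop
  have holder := ENNReal.lintegral_mul_le_Lp_mul_Lq μ hq hm1 hm2
  have hqc : p.conjExponent = q := rfl
  rw [hqc] at holder
  -- first factor is wLp
  have hfac1 : (∫⁻ y, (F y * W y ^ (1/p)) ^ p ∂μ) ^ (1/p) = wLp p w f (ball a t) := by
    unfold wLp
    congr 1
    refine lintegral_congr fun y => ?_
    rw [ENNReal.mul_rpow_of_nonneg _ _ (le_of_lt hp0), ← ENNReal.rpow_mul,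
      one_div_mul_cancel hp0.ne', ENNReal.rpow_one]
  -- second factor is I ^ (1/q)
  have hfac2 : (∫⁻ y, (W y ^ (-(1/p))) ^ q ∂μ) = I := by
    refine lintegral_congr_ae ?_
    filter_upwards [hWpos] with x hx
    rw [← ENNReal.rpow_mul]
    have hexp : -(1/p) * q = -(1/(p-1)) := by
      rw [hqdef]
      rw [neg_mul, neg_inj]
      field_simp
    rw [hexp, hW]
    rw [ENNReal.ofReal_rpow_of_pos hx]
  rw [heq]
  refine le_trans holder ?_
  rw [hfac1, hfac2]
  -- A_p manipulation
  have hap := hAp a t ht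
  have hstep : ν * I ^ (p-1) ≤ ENNReal.ofReal CA * V ^ p := by
    have h1 : V⁻¹ * ν * ((V⁻¹) ^ (p-1) * I ^ (p-1)) ≤ ENNReal.ofReal CA := by
      rw [← ENNReal.mul_rpow_of_nonneg _ _ (le_of_lt hp1)]
      exact hap
    have hVp0 : V ^ p ≠ 0 := (ENNReal.rpow_pos (pos_iff_ne_zero.mpr hV0) hVt).ne'
    have hVpt : V ^ p ≠ ⊤ := ENNReal.rpow_ne_top_of_nonneg (le_of_lt hp0) hVt
    have hone : V ^ p * (V⁻¹ * (V⁻¹) ^ (p-1)) = 1 := by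
      have hinv0 : V⁻¹ ≠ 0 := by simpa using hVt
      have hinvt : V⁻¹ ≠ ⊤ := by simpa using hV0
      have : V⁻¹ * (V⁻¹) ^ (p-1) = (V ^ p)⁻¹ := by
        calc V⁻¹ * V⁻¹ ^ (p-1) = V⁻¹ ^ (1:ℝ) * V⁻¹ ^ (p-1) := by rw [ENNReal.rpow_one]
          _ = V⁻¹ ^ (1 + (p-1)) := (ENNReal.rpow_add _ _ hinv0 hinvt).symm
          _ = V⁻¹ ^ p := by ring_nf
          _ = (V ^ p)⁻¹ := ENNReal.inv_rpow _ _
      rw [this, ENNReal.mul_inv_cancel hVp0 hVpt]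
    calc ν * I ^ (p-1) = V ^ p * (V⁻¹ * (V⁻¹) ^ (p-1)) * (ν * I ^ (p-1)) := by
          rw [hone, one_mul]
      _ = V ^ p * (V⁻¹ * ν * ((V⁻¹) ^ (p-1) * I ^ (p-1))) := by ring
      _ ≤ V ^ p * ENNReal.ofReal CA := mul_le_mul_right h1 _
      _ = ENNReal.ofReal CA * V ^ p := mul_comm _ _
  have hIb : I ^ (1/q) ≤ ENNReal.ofReal CA ^ (1/p) * V * ν ^ (-(1/p)) := by
    have hI1 : I ^ (p-1) ≤ ν⁻¹ * (ENNReal.ofReal CA * V ^ p) := by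
      have h2 := mul_le_mul_right hstep ν⁻¹
      rwa [← mul_assoc, ENNReal.inv_mul_cancel hν0 hνt, one_mul] at h2
    have h1q : 1/q = (p-1) * (1/p) := by
      rw [hqdef]
      field_simp
    calc I ^ (1/q) = (I ^ (p-1)) ^ (1/p) := by rw [← ENNReal.rpow_mul, ← h1q]
      _ ≤ (ν⁻¹ * (ENNReal.ofReal CA * V ^ p)) ^ (1/p) :=
          ENNReal.rpow_le_rpow hI1 (by positivity)
      _ = ν ^ (-(1/p)) * (ENNReal.ofReal CA ^ (1/p) * V) := by
          rw [ENNReal.mul_rpow_of_nonneg _ _ (by positivity),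
            ENNReal.mul_rpow_of_nonneg _ _ (by positivity), ← ENNReal.rpow_mul,
            mul_one_div_cancel hp0.ne', ENNReal.rpow_one, ENNReal.inv_rpow, ← ENNReal.rpow_neg]
      _ = ENNReal.ofReal CA ^ (1/p) * V * ν ^ (-(1/p)) := by ring
  calc wLp p w f (ball a t) * I ^ (1/q)
      ≤ wLp p w f (ball a t) * (ENNReal.ofReal CA ^ (1/p) * V * ν ^ (-(1/p))) :=
        mul_le_mul_right hIb _
    _ = ENNReal.ofReal CA ^ (1/p) * V * ν ^ (-(1/p)) * wLp p w f (ball a t) := by ring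

end Aux3
section Aux4
open MeasureTheory Metric Set
open scoped ENNReal

variable {n : ℕ}

local notation "E" => EuclideanSpace ℝ (Fin n)

lemma wSet_doubling_s19 {p : ℝ} (hp : 1 < p) {w : E → ℝ} (hw : IsWeight w)
    {CA : ℝ}
    (hAp : ∀ (a : E) (r : ℝ), 0 < r →
      ((volume (ball a r))⁻¹ * ∫⁻ x in ball a r, ENNReal.ofReal (w x)) *
        ((volume (ball a r))⁻¹ *
          ∫⁻ x in ball a r, ENNReal.ofReal (w x ^ (-(1 / (p - 1))))) ^ (p - 1) ≤
        ENNReal.ofReal CA)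
    (a : E) {r : ℝ} (hr : 0 < r) :
    wSet w (ball a (2 * r)) ≤
      ENNReal.ofReal CA * ((2 : ℝ≥0∞) ^ n) ^ p * wSet w (ball a r) := by
  have hp0 : (0:ℝ) < p := lt_trans zero_lt_one hp
  have hp1 : (0:ℝ) < p - 1 := by linarith
  have hq := Real.HolderConjugate.conjExponent hp
  set q : ℝ := p / (p - 1) with hqdef
  have hr2 : 0 < 2 * r := by linarith
  set W : E → ℝ≥0∞ := fun x => ENNReal.ofReal (w x) with hWdef
  set V1 : ℝ≥0∞ := volume (ball a r) with hV1
  set V2 : ℝ≥0∞ := volume (ball a (2 * r)) with hV2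
  set ν1 : ℝ≥0∞ := wSet w (ball a r) with hν1
  set ν2 : ℝ≥0∞ := wSet w (ball a (2 * r)) with hν2
  set I1 : ℝ≥0∞ := ∫⁻ x in ball a r, ENNReal.ofReal (w x ^ (-(1 / (p - 1)))) with hI1
  set I2 : ℝ≥0∞ := ∫⁻ x in ball a (2 * r), ENNReal.ofReal (w x ^ (-(1 / (p - 1)))) with hI2
  have hWmeas : Measurable W := ENNReal.measurable_ofReal.comp hw.1
  have hV10 : V1 ≠ 0 := (measure_ball_pos volume a hr).ne'
  have hV1t : V1 ≠ ⊤ := measure_ball_lt_top.ne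
  have hV20 : V2 ≠ 0 := (measure_ball_pos volume a hr2).ne'
  have hV2t : V2 ≠ ⊤ := measure_ball_lt_top.ne
  have hν10 : ν1 ≠ 0 := (wSet_pos hw a hr).ne'
  have hν1t : ν1 ≠ ⊤ := (wSet_lt_top hw a r).ne
  have hν20 : ν2 ≠ 0 := (wSet_pos hw a hr2).ne'
  have hν2t : ν2 ≠ ⊤ := (wSet_lt_top hw a (2 * r)).ne
  -- Hölder with f = 1 on ball a r
  have holder1 : V1 ≤ ν1 ^ (1/p) * I1 ^ (1/q) := by
    set μ := volume.restrict (ball a r) with hμ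
    have hWpos : ∀ᵐ x ∂μ, 0 < w x := ae_restrict_of_ae hw.2.2.2
    have heq : V1 = ∫⁻ y, ((fun y => W y ^ (1/p)) * fun y => W y ^ (-(1/p))) y ∂μ := by
      rw [hV1, ← setLIntegral_one]
      refine lintegral_congr_ae ?_
      filter_upwards [hWpos] with x hx
      have hW0 : W x ≠ 0 := by simp [hWdef, hx, ENNReal.ofReal_eq_zero, not_le]
      have hWt : W x ≠ ⊤ := ENNReal.ofReal_ne_top
      simp only [Pi.mul_apply]
      rw [← ENNReal.rpow_add _ _ hW0 hWt, add_neg_cancel, ENNReal.rpow_zero]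
    have hm1 : AEMeasurable (fun y : E => W y ^ (1/p)) μ := by fun_prop
    have hm2 : AEMeasurable (fun y : E => W y ^ (-(1/p))) μ := by fun_prop
    have holder := ENNReal.lintegral_mul_le_Lp_mul_Lq μ hq hm1 hm2
    have hqc : p.conjExponent = q := rfl
    rw [hqc] at holder
    rw [heq]
    refine le_trans holder (le_of_eq ?_)
    congr 1
    · congr 1
      refine lintegral_congr fun y => ?_
      rw [← ENNReal.rpow_mul, one_div_mul_cancel hp0.ne', ENNReal.rpow_one]
    · congr 1
      refine lintegral_congr_ae ?_
      filter_upwards [hWpos] with x hx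
      rw [← ENNReal.rpow_mul]
      have hexp : -(1/p) * q = -(1/(p-1)) := by
        rw [hqdef, neg_mul, neg_inj]
        field_simp
      rw [hexp, hWdef, ENNReal.ofReal_rpow_of_pos hx]
  -- A_p at radius 2r
  have hstep : ν2 * I2 ^ (p-1) ≤ ENNReal.ofReal CA * V2 ^ p := by
    have hap := hAp a (2 * r) hr2
    have h1 : V2⁻¹ * ν2 * ((V2⁻¹) ^ (p-1) * I2 ^ (p-1)) ≤ ENNReal.ofReal CA := by
      rw [← ENNReal.mul_rpow_of_nonneg _ _ (le_of_lt hp1)]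
      exact hap
    have hVp0 : V2 ^ p ≠ 0 := (ENNReal.rpow_pos (pos_iff_ne_zero.mpr hV20) hV2t).ne'
    have hVpt : V2 ^ p ≠ ⊤ := ENNReal.rpow_ne_top_of_nonneg (le_of_lt hp0) hV2t
    have hinv0 : V2⁻¹ ≠ 0 := by simpa using hV2t
    have hinvt : V2⁻¹ ≠ ⊤ := by simpa using hV20
    have hone : V2 ^ p * (V2⁻¹ * (V2⁻¹) ^ (p-1)) = 1 := by
      have h2 : V2⁻¹ * (V2⁻¹) ^ (p-1) = (V2 ^ p)⁻¹ := by
        calc V2⁻¹ * V2⁻¹ ^ (p-1) = V2⁻¹ ^ (1:ℝ) * V2⁻¹ ^ (p-1) := by rw [ENNReal.rpow_one]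
          _ = V2⁻¹ ^ (1 + (p-1)) := (ENNReal.rpow_add _ _ hinv0 hinvt).symm
          _ = V2⁻¹ ^ p := by ring_nf
          _ = (V2 ^ p)⁻¹ := ENNReal.inv_rpow _ _
      rw [h2, ENNReal.mul_inv_cancel hVp0 hVpt]
    calc ν2 * I2 ^ (p-1) = V2 ^ p * (V2⁻¹ * (V2⁻¹) ^ (p-1)) * (ν2 * I2 ^ (p-1)) := by
          rw [hone, one_mul]
      _ = V2 ^ p * (V2⁻¹ * ν2 * ((V2⁻¹) ^ (p-1) * I2 ^ (p-1))) := by ring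
      _ ≤ V2 ^ p * ENNReal.ofReal CA := mul_le_mul_right h1 _
      _ = ENNReal.ofReal CA * V2 ^ p := mul_comm _ _
  have hIb : I2 ^ (1/q) ≤ ENNReal.ofReal CA ^ (1/p) * V2 * ν2 ^ (-(1/p)) := by
    have hI1' : I2 ^ (p-1) ≤ ν2⁻¹ * (ENNReal.ofReal CA * V2 ^ p) := by
      have h2 := mul_le_mul_right hstep ν2⁻¹
      rwa [← mul_assoc, ENNReal.inv_mul_cancel hν20 hν2t, one_mul] at h2
    have h1q : 1/q = (p-1) * (1/p) := by
      rw [hqdef]; field_simp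
    calc I2 ^ (1/q) = (I2 ^ (p-1)) ^ (1/p) := by rw [← ENNReal.rpow_mul, ← h1q]
      _ ≤ (ν2⁻¹ * (ENNReal.ofReal CA * V2 ^ p)) ^ (1/p) :=
          ENNReal.rpow_le_rpow hI1' (by positivity)
      _ = ν2 ^ (-(1/p)) * (ENNReal.ofReal CA ^ (1/p) * V2) := by
          rw [ENNReal.mul_rpow_of_nonneg _ _ (by positivity),
            ENNReal.mul_rpow_of_nonneg _ _ (by positivity), ← ENNReal.rpow_mul,
            mul_one_div_cancel hp0.ne', ENNReal.rpow_one, ENNReal.inv_rpow, ← ENNReal.rpow_neg]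
      _ = ENNReal.ofReal CA ^ (1/p) * V2 * ν2 ^ (-(1/p)) := by ring
  -- combine
  have hImono : I1 ≤ I2 := lintegral_mono_set (ball_subset_ball (by linarith))
  have key : ν2 ^ (1/p) * V1 ≤ ENNReal.ofReal CA ^ (1/p) * V2 * ν1 ^ (1/p) := by
    calc ν2 ^ (1/p) * V1 ≤ ν2 ^ (1/p) * (ν1 ^ (1/p) * I2 ^ (1/q)) := by
          refine mul_le_mul_right (le_trans holder1 ?_) _
          exact mul_le_mul_right (ENNReal.rpow_le_rpow hImono (by positivity)) _
      _ ≤ ν2 ^ (1/p) * (ν1 ^ (1/p) * (ENNReal.ofReal CA ^ (1/p) * V2 * ν2 ^ (-(1/p)))) := by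
          exact mul_le_mul_right (mul_le_mul_right hIb _) _
      _ = (ν2 ^ (1/p) * ν2 ^ (-(1/p))) * (ν1 ^ (1/p) * (ENNReal.ofReal CA ^ (1/p) * V2)) := by
          ring
      _ = ENNReal.ofReal CA ^ (1/p) * V2 * ν1 ^ (1/p) := by
          rw [ENNReal.rpow_neg, ENNReal.mul_inv_cancel
            (ENNReal.rpow_pos (pos_iff_ne_zero.mpr hν20) hν2t).ne'
            (ENNReal.rpow_ne_top_of_nonneg (by positivity) hν2t), one_mul]
          ring
  -- raise to power p
  have keyp := ENNReal.rpow_le_rpow key (le_of_lt hp0)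
  rw [ENNReal.mul_rpow_of_nonneg _ _ (le_of_lt hp0),
    ENNReal.mul_rpow_of_nonneg _ _ (le_of_lt hp0),
    ENNReal.mul_rpow_of_nonneg _ _ (le_of_lt hp0),
    ← ENNReal.rpow_mul, ← ENNReal.rpow_mul, ← ENNReal.rpow_mul,
    one_div_mul_cancel hp0.ne', ENNReal.rpow_one, ENNReal.rpow_one, ENNReal.rpow_one] at keyp
  -- keyp : ν2 * V1 ^ p ≤ ENNReal.ofReal CA * V2 ^ p * ν1
  have hV2eq : V2 = (2:ℝ≥0∞) ^ n * V1 := by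
    rw [hV2, hV1, vol_ball a hr2, vol_ball a hr, mul_pow]
    rw [ENNReal.ofReal_mul (by positivity), ENNReal.ofReal_pow (by norm_num)]
    rw [ENNReal.ofReal_ofNat]
    ring
  have hV1p0 : V1 ^ p ≠ 0 := (ENNReal.rpow_pos (pos_iff_ne_zero.mpr hV10) hV1t).ne'
  have hV1pt : V1 ^ p ≠ ⊤ := ENNReal.rpow_ne_top_of_nonneg (le_of_lt hp0) hV1t
  have h2 := mul_le_mul_left keyp (V1 ^ p)⁻¹
  rw [mul_assoc, ENNReal.mul_inv_cancel hV1p0 hV1pt, mul_one] at h2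
  refine le_trans h2 (le_of_eq ?_)
  have hcancel : V1 ^ p * (V1 ^ p)⁻¹ = 1 := ENNReal.mul_inv_cancel hV1p0 hV1pt
  have hq2 : ENNReal.ofReal CA * ((2:ℝ≥0∞) ^ n * V1) ^ p * ν1 * (V1 ^ p)⁻¹
      = ENNReal.ofReal CA * ((2:ℝ≥0∞) ^ n) ^ p * ν1 * (V1 ^ p * (V1 ^ p)⁻¹) := by
    rw [ENNReal.mul_rpow_of_nonneg _ _ (le_of_lt hp0)]
    ring
  rw [hV2eq, hq2, hcancel, mul_one]

end Aux4
section Aux5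
open MeasureTheory Metric Set
open scoped ENNReal

variable {n : ℕ}

local notation "E" => EuclideanSpace ℝ (Fin n)

lemma f1_bound {p : ℝ} (hp : 1 < p) {w f : E → ℝ} (hw : IsWeight w)
    {ψ₁ ψ₂ : E → ℝ → ℝ} (hψ₁ : ∀ a r, 0 < r → 0 < ψ₁ a r)
    {C : ℝ}
    (hcond : ∀ (a : E) (r : ℝ), 0 < r →
      (∫⁻ t in Set.Ioi r, ENNReal.ofReal (ψ₁ a t) * ENNReal.ofReal t⁻¹) ≤
        ENNReal.ofReal (C * ψ₂ a r))
    (hM : morreyNorm p w ψ₁ f ≠ ⊤)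
    (a : E) {r : ℝ} (hr : 0 < r) :
    wLp p w f (closedBall a (2 * r)) ≤
      ENNReal.ofReal 4 * wSet w (ball a (4 * r)) ^ (1 / p) * morreyNorm p w ψ₁ f *
        ENNReal.ofReal (C * ψ₂ a r) := by
  set M := morreyNorm p w ψ₁ f with hMdef
  set ν4 : ℝ≥0∞ := wSet w (ball a (4 * r)) with hν4
  set X : ℝ≥0∞ := wLp p w f (closedBall a (2 * r)) with hX
  have hν4t : ν4 ≠ ⊤ := (wSet_lt_top hw a (4 * r)).ne
  have hKne : ν4 ^ (1 / p) * M ≠ ⊤ :=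
    ENNReal.mul_ne_top (ENNReal.rpow_ne_top_of_nonneg (by positivity) hν4t) hM
  have key1 : ∀ t ∈ Ioo (3 * r) (4 * r), X ≤ ENNReal.ofReal (ψ₁ a t) * (ν4 ^ (1 / p) * M) := by
    intro t ht
    have ht0 : 0 < t := lt_trans (by linarith) ht.1
    have hsub : closedBall a (2 * r) ⊆ ball a t := fun x hx => by
      simp only [mem_closedBall, mem_ball] at hx ⊢
      have := ht.1
      linarith
    refine le_trans (wLp_mono_set (lt_trans zero_lt_one hp) hsub) ?_
    refine le_trans (morrey_pointwise hp hw a ht0 (hψ₁ a t ht0)) ?_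
    rw [mul_assoc]
    refine mul_le_mul_right (mul_le_mul_left ?_ _) _
    exact ENNReal.rpow_le_rpow (lintegral_mono_set (ball_subset_ball (le_of_lt ht.2)))
      (by positivity)
  have hmeas_inv : Measurable fun t : ℝ => ENNReal.ofReal t⁻¹ :=
    ENNReal.measurable_ofReal.comp measurable_inv
  have key2 : (∫⁻ t in Ioo (3 * r) (4 * r), ENNReal.ofReal t⁻¹) * X ≤
      (ν4 ^ (1 / p) * M) * ∫⁻ t in Ioo (3 * r) (4 * r),
        ENNReal.ofReal (ψ₁ a t) * ENNReal.ofReal t⁻¹ := by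
    rw [← lintegral_mul_const _ hmeas_inv, ← lintegral_const_mul' _ _ hKne]
    refine lintegral_mono_ae ?_
    filter_upwards [ae_restrict_mem measurableSet_Ioo] with t ht
    calc ENNReal.ofReal t⁻¹ * X ≤ ENNReal.ofReal t⁻¹ *
          (ENNReal.ofReal (ψ₁ a t) * (ν4 ^ (1 / p) * M)) := mul_le_mul_right (key1 t ht) _
      _ = ν4 ^ (1 / p) * M * (ENNReal.ofReal (ψ₁ a t) * ENNReal.ofReal t⁻¹) := by ring
  have hlow : ENNReal.ofReal (4:ℝ)⁻¹ * X ≤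
      (∫⁻ t in Ioo (3 * r) (4 * r), ENNReal.ofReal t⁻¹) * X := by
    refine mul_le_mul_left ?_ _
    have h1 : (∫⁻ _t in Ioo (3 * r) (4 * r), ENNReal.ofReal (4 * r)⁻¹) ≤
        ∫⁻ t in Ioo (3 * r) (4 * r), ENNReal.ofReal t⁻¹ := by
      refine lintegral_mono_ae ?_
      filter_upwards [ae_restrict_mem measurableSet_Ioo] with t ht
      have ht0 : 0 < t := lt_trans (by linarith) ht.1
      exact ENNReal.ofReal_le_ofReal (inv_anti₀ ht0 (le_of_lt ht.2))
    refine le_trans (le_of_eq ?_) h1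
    rw [setLIntegral_const, Real.volume_Ioo, ← ENNReal.ofReal_mul (by positivity)]
    congr 1
    rw [show (4:ℝ) * r - 3 * r = r by ring]
    field_simp
  have hup : (ν4 ^ (1 / p) * M) * ∫⁻ t in Ioo (3 * r) (4 * r),
        ENNReal.ofReal (ψ₁ a t) * ENNReal.ofReal t⁻¹ ≤
      (ν4 ^ (1 / p) * M) * ENNReal.ofReal (C * ψ₂ a r) := by
    refine mul_le_mul_right ?_ _
    refine le_trans (lintegral_mono_set ?_) (hcond a r hr)
    intro t ht
    exact lt_trans (by linarith : r < 3 * r) ht.1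
  have main : ENNReal.ofReal (4:ℝ)⁻¹ * X ≤ (ν4 ^ (1 / p) * M) * ENNReal.ofReal (C * ψ₂ a r) :=
    le_trans hlow (le_trans key2 hup)
  have h4 : (ENNReal.ofReal (4:ℝ)) * ENNReal.ofReal (4:ℝ)⁻¹ = 1 := by
    rw [← ENNReal.ofReal_mul (by norm_num)]
    norm_num
  calc X = ENNReal.ofReal (4:ℝ) * ENNReal.ofReal (4:ℝ)⁻¹ * X := by rw [h4, one_mul]
    _ = ENNReal.ofReal (4:ℝ) * (ENNReal.ofReal (4:ℝ)⁻¹ * X) := by ring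
    _ ≤ ENNReal.ofReal (4:ℝ) * ((ν4 ^ (1 / p) * M) * ENNReal.ofReal (C * ψ₂ a r)) :=
        mul_le_mul_right main _
    _ = ENNReal.ofReal 4 * ν4 ^ (1 / p) * M * ENNReal.ofReal (C * ψ₂ a r) := by ring

end Aux5
section Aux6
open MeasureTheory Metric Set
open scoped ENNReal

variable {n : ℕ}

local notation "E" => EuclideanSpace ℝ (Fin n)

lemma ball_F_bound {p : ℝ} (hp : 1 < p) {w f : E → ℝ} (hw : IsWeight w) (hf : Measurable f)
    {CA : ℝ}
    (hAp : ∀ (a : E) (r : ℝ), 0 < r →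
      ((volume (ball a r))⁻¹ * ∫⁻ x in ball a r, ENNReal.ofReal (w x)) *
        ((volume (ball a r))⁻¹ *
          ∫⁻ x in ball a r, ENNReal.ofReal (w x ^ (-(1 / (p - 1))))) ^ (p - 1) ≤
        ENNReal.ofReal CA)
    {ψ₁ : E → ℝ → ℝ} (hψ₁ : ∀ a r, 0 < r → 0 < ψ₁ a r)
    (a : E) {t : ℝ} (ht : 0 < t) :
    ∫⁻ y in ball a t, ENNReal.ofReal |f y| ≤
      ENNReal.ofReal CA ^ (1 / p) * volume (ball a t) *
        (ENNReal.ofReal (ψ₁ a t) * morreyNorm p w ψ₁ f) := by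
  have hν0 : wSet w (ball a t) ≠ 0 := (wSet_pos hw a ht).ne'
  have hνt : wSet w (ball a t) ≠ ⊤ := (wSet_lt_top hw a t).ne
  have hcan : wSet w (ball a t) ^ (-(1 / p)) * wSet w (ball a t) ^ ((1:ℝ) / p) = 1 := by
    rw [ENNReal.rpow_neg, ENNReal.inv_mul_cancel
      (ENNReal.rpow_pos (pos_iff_ne_zero.mpr hν0) hνt).ne'
      (ENNReal.rpow_ne_top_of_nonneg (by positivity) hνt)]
  have hX : wSet w (ball a t) ^ (-(1 / p)) * wLp p w f (ball a t) ≤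
      ENNReal.ofReal (ψ₁ a t) * morreyNorm p w ψ₁ f := by
    refine le_trans (mul_le_mul_right (morrey_pointwise hp hw a ht (hψ₁ a t ht)) _) ?_
    refine le_of_eq ?_
    calc wSet w (ball a t) ^ (-(1 / p)) *
          (ENNReal.ofReal (ψ₁ a t) * wSet w (ball a t) ^ (1 / p) * morreyNorm p w ψ₁ f)
        = (wSet w (ball a t) ^ (-(1 / p)) * wSet w (ball a t) ^ ((1:ℝ) / p)) *
            (ENNReal.ofReal (ψ₁ a t) * morreyNorm p w ψ₁ f) := by ring
      _ = ENNReal.ofReal (ψ₁ a t) * morreyNorm p w ψ₁ f := by rw [hcan, one_mul]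
  refine le_trans (holder_Ap hp hw hf hAp a ht) ?_
  calc ENNReal.ofReal CA ^ (1 / p) * volume (ball a t) * wSet w (ball a t) ^ (-(1 / p)) *
        wLp p w f (ball a t)
      = ENNReal.ofReal CA ^ (1 / p) * volume (ball a t) *
          (wSet w (ball a t) ^ (-(1 / p)) * wLp p w f (ball a t)) := by ring
    _ ≤ ENNReal.ofReal CA ^ (1 / p) * volume (ball a t) *
          (ENNReal.ofReal (ψ₁ a t) * morreyNorm p w ψ₁ f) := mul_le_mul_right hX _

lemma layer_cake_pow {d : ℝ} (hd : 0 < d) (n : ℕ) :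
    (ENNReal.ofReal (d ^ n))⁻¹ ≤
      (2:ℝ≥0∞) ^ (n + 1) * ∫⁻ t in Ioi d, ENNReal.ofReal ((t ^ (n + 1))⁻¹) := by
  have h0 : (∫⁻ t in Ioo d (2 * d), ENNReal.ofReal ((t ^ (n + 1))⁻¹)) ≤
      ∫⁻ t in Ioi d, ENNReal.ofReal ((t ^ (n + 1))⁻¹) :=
    lintegral_mono_set Ioo_subset_Ioi_self
  have h1 : (∫⁻ _t in Ioo d (2 * d), ENNReal.ofReal (((2 * d) ^ (n + 1))⁻¹)) ≤
      ∫⁻ t in Ioi d, ENNReal.ofReal ((t ^ (n + 1))⁻¹) := by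
    refine le_trans ?_ h0
    refine lintegral_mono_ae ?_
    filter_upwards [ae_restrict_mem measurableSet_Ioo] with t ht
    refine ENNReal.ofReal_le_ofReal ?_
    have ht0 : 0 < t := lt_trans hd ht.1
    exact inv_anti₀ (by positivity) (pow_le_pow_left₀ (le_of_lt ht0) (le_of_lt ht.2) _)
  rw [setLIntegral_const, Real.volume_Ioo] at h1
  refine le_trans (le_of_eq ?_) (mul_le_mul_right h1 _)
  rw [show 2 * d - d = d by ring, ← ENNReal.ofReal_mul (by positivity)]
  have h2 : ((2:ℝ≥0∞) ^ (n + 1)) = ENNReal.ofReal ((2:ℝ) ^ (n + 1)) := by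
    rw [ENNReal.ofReal_pow (by norm_num), ENNReal.ofReal_ofNat]
  rw [h2, ← ENNReal.ofReal_mul (by positivity),
    ← ENNReal.ofReal_inv_of_pos (pow_pos hd n)]
  congr 1
  rw [mul_pow]
  field_simp
  ring

end Aux6
section Aux7
open MeasureTheory Metric Set
open scoped ENNReal

variable {n : ℕ}

local notation "E" => EuclideanSpace ℝ (Fin n)

lemma J_bound {p : ℝ} (hp : 1 < p) {w f : E → ℝ} (hw : IsWeight w) (hf : Measurable f)
    {CA : ℝ}
    (hAp : ∀ (a : E) (r : ℝ), 0 < r →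
      ((volume (ball a r))⁻¹ * ∫⁻ x in ball a r, ENNReal.ofReal (w x)) *
        ((volume (ball a r))⁻¹ *
          ∫⁻ x in ball a r, ENNReal.ofReal (w x ^ (-(1 / (p - 1))))) ^ (p - 1) ≤
        ENNReal.ofReal CA)
    {ψ₁ ψ₂ : E → ℝ → ℝ} (hψ₁ : ∀ a r, 0 < r → 0 < ψ₁ a r)
    {C : ℝ}
    (hcond : ∀ (a : E) (r : ℝ), 0 < r →
      (∫⁻ t in Set.Ioi r, ENNReal.ofReal (ψ₁ a t) * ENNReal.ofReal t⁻¹) ≤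
        ENNReal.ofReal (C * ψ₂ a r))
    (hM : morreyNorm p w ψ₁ f ≠ ⊤)
    (a : E) {r : ℝ} (hr : 0 < r) :
    (∫⁻ y in (closedBall a (2 * r))ᶜ,
        ENNReal.ofReal |f y| * (ENNReal.ofReal (dist a y ^ n))⁻¹) ≤
      (2:ℝ≥0∞) ^ (n + 1) * volume (ball (0:E) 1) * ENNReal.ofReal CA ^ (1 / p) *
        morreyNorm p w ψ₁ f * ENNReal.ofReal (C * ψ₂ a r) := by
  rcases Nat.eq_zero_or_pos n with hn | hn
  · -- n = 0 : the complement of the closed ball is empty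
    have hempty : (closedBall a (2 * r))ᶜ = (∅ : Set (EuclideanSpace ℝ (Fin n))) := by
      subst hn
      haveI : Subsingleton (EuclideanSpace ℝ (Fin 0)) := by
        constructor; intro x y; ext i; exact absurd i.2 (Nat.not_lt_zero _)
      refine eq_empty_iff_forall_notMem.mpr fun y hy => hy ?_
      simp only [mem_closedBall]
      rw [Subsingleton.elim y a, dist_self]
      positivity
    rw [hempty]
    simp
  -- n ≥ 1
  set M := morreyNorm p w ψ₁ f with hMdef
  set S := (closedBall a (2 * r))ᶜ with hS
  have hSmeas : MeasurableSet S := measurableSet_closedBall.compl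
  set F : EuclideanSpace ℝ (Fin n) → ℝ≥0∞ := fun y => ENNReal.ofReal |f y| with hFdef
  have hFmeas : Measurable F := ENNReal.measurable_ofReal.comp (continuous_abs.measurable.comp hf)
  set g : ℝ → ℝ≥0∞ := fun t => ENNReal.ofReal ((t ^ (n + 1))⁻¹) with hgdef
  have hgmeas : Measurable g :=
    ENNReal.measurable_ofReal.comp ((measurable_id.pow_const (n+1)).inv)
  have hdistS : ∀ y ∈ S, 2 * r < dist a y := by
    intro y hy
    rw [dist_comm]
    simpa [hS, mem_closedBall, not_le] using hy
  -- Step 1 : layer cake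
  have step1 : (∫⁻ y in S, F y * (ENNReal.ofReal (dist a y ^ n))⁻¹) ≤
      (2:ℝ≥0∞) ^ (n + 1) * ∫⁻ y in S, F y * ∫⁻ t in Ioi (dist a y), g t := by
    rw [← lintegral_const_mul' _ _ (ENNReal.pow_ne_top ENNReal.ofNat_ne_top)]
    refine lintegral_mono_ae ?_
    filter_upwards [ae_restrict_mem hSmeas] with y hy
    have hd : 2 * r < dist a y := hdistS y hy
    calc F y * (ENNReal.ofReal (dist a y ^ n))⁻¹
        ≤ F y * ((2:ℝ≥0∞) ^ (n + 1) * ∫⁻ t in Ioi (dist a y), g t) :=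
          mul_le_mul_right (layer_cake_pow (lt_trans (by linarith) hd) n) _
      _ = (2:ℝ≥0∞) ^ (n + 1) * (F y * ∫⁻ t in Ioi (dist a y), g t) := by ring
  -- Step 2 : rewrite inner integral over a fixed interval
  have step2 : ∀ y ∈ S, F y * (∫⁻ t in Ioi (dist a y), g t) =
      ∫⁻ t in Ioi (2 * r), F y * (Ioi (dist a y)).indicator g t := by
    intro y hy
    have hd : 2 * r < dist a y := hdistS y hy
    rw [lintegral_const_mul' _ _ ENNReal.ofReal_ne_top]
    congr 1
    rw [lintegral_indicator measurableSet_Ioi, Measure.restrict_restrict measurableSet_Ioi,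
      inter_eq_left.mpr (Ioi_subset_Ioi (le_of_lt hd))]
  -- Step 3 : Tonelli
  set Φ : EuclideanSpace ℝ (Fin n) × ℝ → ℝ≥0∞ :=
    fun q => F q.1 * ({q : EuclideanSpace ℝ (Fin n) × ℝ | dist a q.1 < q.2}.indicator
      (fun q => g q.2) q) with hΦdef
  have hΦmeas : Measurable Φ := by
    refine (hFmeas.comp measurable_fst).mul (Measurable.indicator ?_ ?_)
    · exact hgmeas.comp measurable_snd
    · exact measurableSet_lt ((continuous_dist.comp (Continuous.prodMk_right a)).measurable.comp
        measurable_fst) measurable_snd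
  have hΦeq : ∀ y t, F y * (Ioi (dist a y)).indicator g t = Φ (y, t) := by
    intro y t
    by_cases h : dist a y < t <;>
      simp [hΦdef, Set.indicator_apply, h, mem_Ioi]
  have step3 : (∫⁻ y in S, ∫⁻ t in Ioi (2 * r), Φ (y, t)) =
      ∫⁻ t in Ioi (2 * r), ∫⁻ y in S, Φ (y, t) :=
    lintegral_lintegral_swap hΦmeas.aemeasurable
  -- Step 4 : inner estimate for fixed t
  have hball : ∀ t : ℝ, {y : EuclideanSpace ℝ (Fin n) | dist a y < t} = ball a t := by
    intro t; ext y; simp [mem_ball, dist_comm]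
  have step4 : ∀ t, 2 * r < t → (∫⁻ y in S, Φ (y, t)) ≤ (∫⁻ y in ball a t, F y) * g t := by
    intro t ht
    have heq : ∀ y, Φ (y, t) = (ball a t).indicator (fun y => F y * g t) y := by
      intro y
      rw [← hball t]
      by_cases h : dist a y < t <;>
        simp [hΦdef, Set.indicator_apply, h, mem_Ioi]
    calc (∫⁻ y in S, Φ (y, t)) = ∫⁻ y in S, (ball a t).indicator (fun y => F y * g t) y :=
          lintegral_congr heq
      _ = ∫⁻ y in ball a t ∩ S, F y * g t := by
          rw [lintegral_indicator measurableSet_ball,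
            Measure.restrict_restrict measurableSet_ball]
      _ ≤ ∫⁻ y in ball a t, F y * g t := lintegral_mono_set inter_subset_left
      _ = (∫⁻ y in ball a t, F y) * g t := lintegral_mul_const' _ _ ENNReal.ofReal_ne_top
  -- Step 5 : the ball estimate and the volume computation
  set v1 : ℝ≥0∞ := volume (ball (0:EuclideanSpace ℝ (Fin n)) 1) with hv1
  have hv1t : v1 ≠ ⊤ := measure_ball_lt_top.ne
  have step5 : ∀ t, 2 * r < t →
      (∫⁻ y in ball a t, F y) * g t ≤
        (ENNReal.ofReal CA ^ (1 / p) * v1 * M) *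
          (ENNReal.ofReal (ψ₁ a t) * ENNReal.ofReal t⁻¹) := by
    intro t ht
    have ht0 : 0 < t := lt_trans (by linarith) ht
    have hb := ball_F_bound hp hw hf hAp hψ₁ a ht0
    calc (∫⁻ y in ball a t, F y) * g t
        ≤ (ENNReal.ofReal CA ^ (1 / p) * volume (ball a t) *
            (ENNReal.ofReal (ψ₁ a t) * M)) * g t := mul_le_mul_left hb _
      _ = (ENNReal.ofReal CA ^ (1 / p) * (ENNReal.ofReal (ψ₁ a t) * M)) *
            (volume (ball a t) * g t) := by ring
      _ = (ENNReal.ofReal CA ^ (1 / p) * (ENNReal.ofReal (ψ₁ a t) * M)) *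
            (v1 * ENNReal.ofReal t⁻¹) := by
          rw [vol_ball a ht0, hgdef]
          congr 1
          rw [mul_comm (ENNReal.ofReal (t ^ n)) v1, mul_assoc,
            ← ENNReal.ofReal_mul (by positivity)]
          congr 2
          field_simp
          ring
      _ = (ENNReal.ofReal CA ^ (1 / p) * v1 * M) *
            (ENNReal.ofReal (ψ₁ a t) * ENNReal.ofReal t⁻¹) := by ring
  -- assemble
  have hKne : ENNReal.ofReal CA ^ (1 / p) * v1 * M ≠ ⊤ :=
    ENNReal.mul_ne_top (ENNReal.mul_ne_top
      (ENNReal.rpow_ne_top_of_nonneg (by positivity) ENNReal.ofReal_ne_top) hv1t) hM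
  have main : (∫⁻ y in S, F y * ∫⁻ t in Ioi (dist a y), g t) ≤
      (ENNReal.ofReal CA ^ (1 / p) * v1 * M) * ENNReal.ofReal (C * ψ₂ a r) := by
    have e1 : (∫⁻ y in S, F y * ∫⁻ t in Ioi (dist a y), g t) =
        ∫⁻ y in S, ∫⁻ t in Ioi (2 * r), Φ (y, t) := by
      refine lintegral_congr_ae ?_
      filter_upwards [ae_restrict_mem hSmeas] with y hy
      rw [step2 y hy]
      exact lintegral_congr fun t => hΦeq y t
    rw [e1, step3]
    calc (∫⁻ t in Ioi (2 * r), ∫⁻ y in S, Φ (y, t))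
        ≤ ∫⁻ t in Ioi (2 * r), (ENNReal.ofReal CA ^ (1 / p) * v1 * M) *
            (ENNReal.ofReal (ψ₁ a t) * ENNReal.ofReal t⁻¹) := by
          refine lintegral_mono_ae ?_
          filter_upwards [ae_restrict_mem measurableSet_Ioi] with t ht
          exact le_trans (step4 t ht) (step5 t ht)
      _ = (ENNReal.ofReal CA ^ (1 / p) * v1 * M) *
            ∫⁻ t in Ioi (2 * r), ENNReal.ofReal (ψ₁ a t) * ENNReal.ofReal t⁻¹ :=
          lintegral_const_mul' _ _ hKne
      _ ≤ (ENNReal.ofReal CA ^ (1 / p) * v1 * M) * ENNReal.ofReal (C * ψ₂ a r) := by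
          refine mul_le_mul_right ?_ _
          refine le_trans (lintegral_mono_set (Ioi_subset_Ioi (by linarith))) (hcond a r hr)
  calc (∫⁻ y in S, F y * (ENNReal.ofReal (dist a y ^ n))⁻¹)
      ≤ (2:ℝ≥0∞) ^ (n + 1) * ∫⁻ y in S, F y * ∫⁻ t in Ioi (dist a y), g t := step1
    _ ≤ (2:ℝ≥0∞) ^ (n + 1) *
          ((ENNReal.ofReal CA ^ (1 / p) * v1 * M) * ENNReal.ofReal (C * ψ₂ a r)) :=
        mul_le_mul_right main _
    _ = (2:ℝ≥0∞) ^ (n + 1) * v1 * ENNReal.ofReal CA ^ (1 / p) * M *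
          ENNReal.ofReal (C * ψ₂ a r) := by ring

end Aux7
section Aux8
open MeasureTheory Metric Set
open scoped ENNReal

variable {n : ℕ}

local notation "E" => EuclideanSpace ℝ (Fin n)

lemma Tf2_pointwise {f : E → ℝ}
    {T : (EuclideanSpace ℝ (Fin n) → ℝ) → (EuclideanSpace ℝ (Fin n) → ℝ)}
    {A : ℝ}
    (hker : ∀ (g : EuclideanSpace ℝ (Fin n) → ℝ) (x : EuclideanSpace ℝ (Fin n)),
      x ∉ tsupport g →
      ENNReal.ofReal |T g x| ≤
        ENNReal.ofReal A * ∫⁻ y, ENNReal.ofReal |g y| / ENNReal.ofReal (dist x y ^ n))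
    (a : E) {r : ℝ} (hr : 0 < r) {x : E} (hx : x ∈ ball a r) :
    ENNReal.ofReal |T (((closedBall a (2 * r))ᶜ).indicator f) x| ≤
      ENNReal.ofReal A * ((2:ℝ≥0∞) ^ n *
        ∫⁻ y in (closedBall a (2 * r))ᶜ,
          ENNReal.ofReal |f y| * (ENNReal.ofReal (dist a y ^ n))⁻¹) := by
  set S := (closedBall a (2 * r))ᶜ with hSdef
  have hSmeas : MeasurableSet S := measurableSet_closedBall.compl
  set f₂ : E → ℝ := S.indicator f with hf2def
  have hxsupp : x ∉ tsupport f₂ := by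
    intro hmem
    have h1 : tsupport f₂ ⊆ (ball a (2 * r))ᶜ := by
      refine closure_minimal ?_ isOpen_ball.isClosed_compl
      refine subset_trans Set.support_indicator_subset ?_
      exact compl_subset_compl.mpr ball_subset_closedBall
    have h2 : x ∈ ball a (2 * r) := by
      refine ball_subset_ball (by linarith) hx
    exact (h1 hmem) h2
  refine le_trans (hker f₂ x hxsupp) (mul_le_mul_right ?_ _)
  rw [← lintegral_indicator hSmeas, ← lintegral_const_mul' _ _
    (ENNReal.pow_ne_top ENNReal.ofNat_ne_top)]
  refine lintegral_mono fun y => ?_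
  by_cases hy : y ∈ S
  · have hd : 2 * r < dist a y := by
      rw [dist_comm]
      simpa [hSdef, mem_closedBall, not_le] using hy
    have hd0 : 0 < dist a y := lt_trans (by linarith) hd
    have hxa : dist x a < r := mem_ball.mp hx
    have hlow : dist a y / 2 < dist x y := by
      have htri : dist a y ≤ dist x a + dist x y := by
        rw [dist_comm x a]
        exact dist_triangle a x y
      linarith
    have hpow : (dist a y / 2) ^ n ≤ dist x y ^ n :=
      pow_le_pow_left₀ (by positivity) (le_of_lt hlow) n
    have hstep : ENNReal.ofReal |f₂ y| / ENNReal.ofReal (dist x y ^ n) ≤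
        ENNReal.ofReal |f y| / ENNReal.ofReal ((dist a y / 2) ^ n) := by
      rw [hf2def, Set.indicator_of_mem hy]
      exact ENNReal.div_le_div_left (ENNReal.ofReal_le_ofReal hpow) _
    refine le_trans hstep (le_of_eq ?_)
    rw [Set.indicator_of_mem hy, div_eq_mul_inv]
    rw [← ENNReal.ofReal_inv_of_pos (by positivity),
      ← ENNReal.ofReal_inv_of_pos (pow_pos hd0 n)]
    have h2n : ((dist a y / 2) ^ n)⁻¹ = 2 ^ n * (dist a y ^ n)⁻¹ := by
      rw [div_pow]
      rw [inv_div]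
      ring
    rw [h2n, ENNReal.ofReal_mul (by positivity), ENNReal.ofReal_pow (by norm_num),
      ENNReal.ofReal_ofNat]
    ring
  · rw [hf2def, Set.indicator_of_notMem hy, Set.indicator_of_notMem hy]
    simp
end Aux8
section Aux9
open MeasureTheory Metric Set
open scoped ENNReal

variable {n : ℕ}

local notation "E" => EuclideanSpace ℝ (Fin n)

lemma two_pow_bound {p : ℝ} (hp : 0 ≤ p) (u v : ℝ≥0∞) :
    (u + v) ^ p ≤ (2:ℝ≥0∞) ^ p * (u ^ p + v ^ p) := by
  have h1 : u + v ≤ 2 * max u v := by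
    rcases le_total u v with h | h
    · calc u + v ≤ v + v := add_le_add_left h _
        _ = 2 * v := (two_mul v).symm
        _ ≤ 2 * max u v := mul_le_mul_right (le_max_right _ _) _
    · calc u + v ≤ u + u := add_le_add_right h _
        _ = 2 * u := (two_mul u).symm
        _ ≤ 2 * max u v := mul_le_mul_right (le_max_left _ _) _
  calc (u + v) ^ p ≤ (2 * max u v) ^ p := ENNReal.rpow_le_rpow h1 hp
    _ = (2:ℝ≥0∞) ^ p * (max u v) ^ p := ENNReal.mul_rpow_of_nonneg _ _ hp
    _ ≤ (2:ℝ≥0∞) ^ p * (u ^ p + v ^ p) := by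
        refine mul_le_mul_right ?_ _
        rcases le_total u v with h | h
        · rw [max_eq_right h]; exact le_add_self
        · rw [max_eq_left h]; exact self_le_add_right _ _

lemma wLp_indicator {p : ℝ} (hp : 0 < p) {w f : E → ℝ} {s : Set E} (hs : MeasurableSet s) :
    wLp p w (s.indicator f) univ = wLp p w f s := by
  unfold wLp
  congr 1
  rw [Measure.restrict_univ, ← lintegral_indicator hs]
  refine lintegral_congr fun x => ?_
  by_cases hx : x ∈ s
  · rw [Set.indicator_of_mem hx, Set.indicator_of_mem hx]
  · rw [Set.indicator_of_notMem hx, Set.indicator_of_notMem hx]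
    simp [ENNReal.zero_rpow_of_pos hp]

lemma wLp_split {p : ℝ} (hp : 1 < p) {w : E → ℝ} (hwmeas : Measurable w)
    {u : E → ℝ} {G : E → ℝ≥0∞} {K : ℝ≥0∞} (hK : K ≠ ⊤) {B : Set E} (hB : MeasurableSet B)
    (hpt : ∀ x ∈ B, ENNReal.ofReal |u x| ≤ G x + K) :
    wLp p w u B ≤
      2 * ((∫⁻ x in B, G x ^ p * ENNReal.ofReal (w x)) ^ (1/p) + K * wSet w B ^ (1/p)) := by
  have hp0 : (0:ℝ) < p := lt_trans zero_lt_one hp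
  have h2pt : ((2:ℝ≥0∞) ^ p) ≠ ⊤ := ENNReal.rpow_ne_top_of_nonneg (le_of_lt hp0)
    ENNReal.ofNat_ne_top
  have hKp : K ^ p ≠ ⊤ := ENNReal.rpow_ne_top_of_nonneg (le_of_lt hp0) hK
  have step1 : (∫⁻ x in B, ENNReal.ofReal |u x| ^ p * ENNReal.ofReal (w x)) ≤
      (2:ℝ≥0∞) ^ p * ((∫⁻ x in B, G x ^ p * ENNReal.ofReal (w x)) + K ^ p * wSet w B) := by
    have hmono : (∫⁻ x in B, ENNReal.ofReal |u x| ^ p * ENNReal.ofReal (w x)) ≤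
        ∫⁻ x in B, (2:ℝ≥0∞) ^ p * (G x ^ p * ENNReal.ofReal (w x) +
          K ^ p * ENNReal.ofReal (w x)) := by
      refine lintegral_mono_ae ?_
      filter_upwards [ae_restrict_mem hB] with x hxB
      calc ENNReal.ofReal |u x| ^ p * ENNReal.ofReal (w x)
          ≤ (G x + K) ^ p * ENNReal.ofReal (w x) :=
            mul_le_mul_left (ENNReal.rpow_le_rpow (hpt x hxB) (le_of_lt hp0)) _
        _ ≤ ((2:ℝ≥0∞) ^ p * (G x ^ p + K ^ p)) * ENNReal.ofReal (w x) :=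
            mul_le_mul_left (two_pow_bound (le_of_lt hp0) _ _) _
        _ = (2:ℝ≥0∞) ^ p * (G x ^ p * ENNReal.ofReal (w x) +
              K ^ p * ENNReal.ofReal (w x)) := by ring
    refine le_trans hmono (le_of_eq ?_)
    rw [lintegral_const_mul' _ _ h2pt]
    congr 1
    rw [lintegral_add_right (g := fun x => K ^ p * ENNReal.ofReal (w x)) _ (measurable_const.mul
      (ENNReal.measurable_ofReal.comp hwmeas))]
    congr 1
    exact lintegral_const_mul' _ _ hKp
  have step2 := ENNReal.rpow_le_rpow step1 (by positivity : (0:ℝ) ≤ 1/p)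
  refine le_trans step2 ?_
  rw [ENNReal.mul_rpow_of_nonneg _ _ (by positivity : (0:ℝ) ≤ 1/p), ← ENNReal.rpow_mul,
    mul_one_div_cancel hp0.ne', ENNReal.rpow_one]
  refine mul_le_mul_right ?_ _
  refine le_trans (ENNReal.rpow_add_le_add_rpow _ _ (by positivity)
    (by rw [div_le_one hp0]; linarith)) ?_
  refine add_le_add_right (le_of_eq ?_) _
  rw [ENNReal.mul_rpow_of_nonneg _ _ (by positivity : (0:ℝ) ≤ 1/p), ← ENNReal.rpow_mul,
    mul_one_div_cancel hp0.ne', ENNReal.rpow_one]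

end Aux9
/-- Let `1 < p < ∞`, `w ∈ A_p`, and let `T` be an additive operator that is
bounded on `L^{p,w}` and satisfies `|Tf(x)| ≤ A·∫ |f(y)|/|x−y|^n dy` for `x` outside the
support of `f`. Suppose `ψ₁, ψ₂` are positive functions on `ℝⁿ × (0,∞)` with
`∫_r^∞ ψ₁(a,t) dt/t ≤ C·ψ₂(a,r)` for all `(a,r)`. Then `T` is bounded from `M^{p,w}_{ψ₁}`
to `M^{p,w}_{ψ₂}`. -/
theorem statement19 {n : ℕ} (p : ℝ) (hp : 1 < p)
    (w : EuclideanSpace ℝ (Fin n) → ℝ) (hw : IsWeight w) (hAp : MuckAp p w)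
    (T : (EuclideanSpace ℝ (Fin n) → ℝ) → (EuclideanSpace ℝ (Fin n) → ℝ))
    (hadd : ∀ f g, T (f + g) = T f + T g)
    (C₀ : ℝ) (hC₀ : 0 < C₀)
    (hbdd : ∀ f : EuclideanSpace ℝ (Fin n) → ℝ, Measurable f →
      wLp p w f Set.univ < ⊤ → wLp p w (T f) Set.univ ≤ ENNReal.ofReal C₀ * wLp p w f Set.univ)
    (A : ℝ) (hA : 0 < A)
    (hker : ∀ (f : EuclideanSpace ℝ (Fin n) → ℝ) (x : EuclideanSpace ℝ (Fin n)),
      x ∉ tsupport f →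
      ENNReal.ofReal |T f x| ≤
        ENNReal.ofReal A * ∫⁻ y, ENNReal.ofReal |f y| / ENNReal.ofReal (dist x y ^ n))
    (ψ₁ ψ₂ : EuclideanSpace ℝ (Fin n) → ℝ → ℝ)
    (hψ₁ : ∀ a r, 0 < r → 0 < ψ₁ a r) (hψ₂ : ∀ a r, 0 < r → 0 < ψ₂ a r)
    (C : ℝ) (hC : 0 < C)
    (hcond : ∀ (a : EuclideanSpace ℝ (Fin n)) (r : ℝ), 0 < r →
      (∫⁻ t in Set.Ioi r, ENNReal.ofReal (ψ₁ a t) * ENNReal.ofReal t⁻¹) ≤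
        ENNReal.ofReal (C * ψ₂ a r)) :
    ∃ C' : ℝ, 0 < C' ∧ ∀ f : EuclideanSpace ℝ (Fin n) → ℝ,
      MemLocWLp p w f → morreyNorm p w ψ₁ f < ⊤ →
      morreyNorm p w ψ₂ (T f) ≤ ENNReal.ofReal C' * morreyNorm p w ψ₁ f := by
  classical
  obtain ⟨CA, hCA0, hApC⟩ := hAp
  set ED : ℝ≥0∞ := ENNReal.ofReal CA * ((2:ℝ≥0∞) ^ n) ^ p with hEDdef
  set v1 : ℝ≥0∞ := volume (ball (0 : EuclideanSpace ℝ (Fin n)) 1) with hv1def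
  have hv1t : v1 ≠ ⊤ := measure_ball_lt_top.ne
  have hEDt : ED ≠ ⊤ := ENNReal.mul_ne_top ENNReal.ofReal_ne_top
    (ENNReal.rpow_ne_top_of_nonneg (by positivity) (ENNReal.pow_ne_top ENNReal.ofNat_ne_top))
  set 𝒜 : ℝ≥0∞ := ENNReal.ofReal C₀ * ENNReal.ofReal 4 * (ED * ED) ^ (1/p) *
    ENNReal.ofReal C with h𝒜def
  set ℬ : ℝ≥0∞ := ENNReal.ofReal A * (2:ℝ≥0∞) ^ n * ((2:ℝ≥0∞) ^ (n+1) * v1 *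
    ENNReal.ofReal CA ^ (1/p)) * ENNReal.ofReal C with hℬdef
  set 𝒦 : ℝ≥0∞ := 2 * (𝒜 + ℬ) with h𝒦def
  have h𝒜t : 𝒜 ≠ ⊤ := by
    refine ENNReal.mul_ne_top (ENNReal.mul_ne_top (ENNReal.mul_ne_top ?_ ?_) ?_) ?_
    · exact ENNReal.ofReal_ne_top
    · exact ENNReal.ofReal_ne_top
    · exact ENNReal.rpow_ne_top_of_nonneg (by positivity) (ENNReal.mul_ne_top hEDt hEDt)
    · exact ENNReal.ofReal_ne_top
  have hℬt : ℬ ≠ ⊤ := by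
    refine ENNReal.mul_ne_top (ENNReal.mul_ne_top (ENNReal.mul_ne_top ?_ ?_) ?_) ?_
    · exact ENNReal.ofReal_ne_top
    · exact ENNReal.pow_ne_top ENNReal.ofNat_ne_top
    · exact ENNReal.mul_ne_top (ENNReal.mul_ne_top (ENNReal.pow_ne_top ENNReal.ofNat_ne_top) hv1t)
        (ENNReal.rpow_ne_top_of_nonneg (by positivity) ENNReal.ofReal_ne_top)
    · exact ENNReal.ofReal_ne_top
  have h𝒦t : 𝒦 ≠ ⊤ := ENNReal.mul_ne_top ENNReal.ofNat_ne_top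
    (ENNReal.add_ne_top.mpr ⟨h𝒜t, hℬt⟩)
  refine ⟨𝒦.toReal + 1, by positivity, ?_⟩
  intro f hfloc hMfin
  obtain ⟨hfmeas, hfloc⟩ := hfloc
  set M : ℝ≥0∞ := morreyNorm p w ψ₁ f with hMdef
  have hMne : M ≠ ⊤ := hMfin.ne
  have h𝒦C' : 𝒦 ≤ ENNReal.ofReal (𝒦.toReal + 1) := by
    calc 𝒦 = ENNReal.ofReal 𝒦.toReal := (ENNReal.ofReal_toReal h𝒦t).symm
      _ ≤ ENNReal.ofReal (𝒦.toReal + 1) := ENNReal.ofReal_le_ofReal (by linarith)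
  refine le_trans ?_ (mul_le_mul_left h𝒦C' M)
  -- main estimate : morreyNorm of T f is at most 𝒦 * M
  refine iSup_le fun a => iSup_le fun rr => ?_
  obtain ⟨r, hr⟩ := rr
  simp only
  have hr : (0:ℝ) < r := hr
  set S := (closedBall a (2 * r))ᶜ with hSdef
  set f₁ : EuclideanSpace ℝ (Fin n) → ℝ := (closedBall a (2 * r)).indicator f with hf1def
  set f₂ : EuclideanSpace ℝ (Fin n) → ℝ := S.indicator f with hf2def
  have hTsplit : T f = T f₁ + T f₂ := by
    have h1 : f₁ + f₂ = f := Set.indicator_self_add_compl (closedBall a (2 * r)) f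
    rw [← h1, hadd f₁ f₂]
  set J : ℝ≥0∞ := ∫⁻ y in S, ENNReal.ofReal |f y| * (ENNReal.ofReal (dist a y ^ n))⁻¹
    with hJdef
  have hJbound : J ≤ (2:ℝ≥0∞) ^ (n + 1) * v1 * ENNReal.ofReal CA ^ (1 / p) * M *
      ENNReal.ofReal (C * ψ₂ a r) := J_bound hp hw hfmeas hApC hψ₁ hcond hMne a hr
  have hJt : J ≠ ⊤ := by
    refine (lt_of_le_of_lt hJbound ?_).ne
    refine ENNReal.mul_lt_top (ENNReal.mul_lt_top (ENNReal.mul_lt_top (ENNReal.mul_lt_top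
      ?_ ?_) ?_) ?_) ?_
    · exact (ENNReal.pow_ne_top ENNReal.ofNat_ne_top).lt_top
    · exact hv1t.lt_top
    · exact (ENNReal.rpow_ne_top_of_nonneg (by positivity) ENNReal.ofReal_ne_top).lt_top
    · exact hMne.lt_top
    · exact ENNReal.ofReal_ne_top.lt_top
  set K : ℝ≥0∞ := ENNReal.ofReal A * ((2:ℝ≥0∞) ^ n * J) with hKdef
  have hKt : K ≠ ⊤ := ENNReal.mul_ne_top ENNReal.ofReal_ne_top
    (ENNReal.mul_ne_top (ENNReal.pow_ne_top ENNReal.ofNat_ne_top) hJt)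
  -- pointwise bound on the ball
  have hpt : ∀ x ∈ ball a r, ENNReal.ofReal |T f x| ≤ ENNReal.ofReal |T f₁ x| + K := by
    intro x hx
    have h1 : T f x = T f₁ x + T f₂ x := by rw [hTsplit]; rfl
    calc ENNReal.ofReal |T f x| ≤ ENNReal.ofReal (|T f₁ x| + |T f₂ x|) := by
          rw [h1]; exact ENNReal.ofReal_le_ofReal (abs_add_le _ _)
      _ ≤ ENNReal.ofReal |T f₁ x| + ENNReal.ofReal |T f₂ x| := ENNReal.ofReal_add_le
      _ ≤ ENNReal.ofReal |T f₁ x| + K := add_le_add_right (Tf2_pointwise hker a hr hx) _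
  -- split estimate
  have hsplit := wLp_split hp hw.1 hKt measurableSet_ball hpt
  -- the integral of |T f₁|^p over the ball is wLp of T f₁
  have hshape : (∫⁻ x in ball a r, ENNReal.ofReal |T f₁ x| ^ p * ENNReal.ofReal (w x)) ^
      (1/p) = wLp p w (T f₁) (ball a r) := rfl
  rw [hshape] at hsplit
  -- bound for T f₁
  have hf1meas : Measurable f₁ := hfmeas.indicator measurableSet_closedBall
  have hf1eq : wLp p w f₁ univ = wLp p w f (closedBall a (2 * r)) :=
    wLp_indicator (lt_trans zero_lt_one hp) measurableSet_closedBall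
  have hf1fin : wLp p w f₁ univ < ⊤ := by
    rw [hf1eq]
    refine lt_of_le_of_lt (wLp_mono_set (lt_trans zero_lt_one hp)
      (closedBall_subset_ball (by linarith))) (hfloc a (3 * r) (by linarith))
  have hTf1 : wLp p w (T f₁) (ball a r) ≤
      ENNReal.ofReal C₀ * (ENNReal.ofReal 4 * wSet w (ball a (4 * r)) ^ (1 / p) * M *
        ENNReal.ofReal (C * ψ₂ a r)) := by
    calc wLp p w (T f₁) (ball a r) ≤ wLp p w (T f₁) univ :=
          wLp_mono_set (lt_trans zero_lt_one hp) (subset_univ _)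
      _ ≤ ENNReal.ofReal C₀ * wLp p w f₁ univ := hbdd f₁ hf1meas hf1fin
      _ = ENNReal.ofReal C₀ * wLp p w f (closedBall a (2 * r)) := by rw [hf1eq]
      _ ≤ ENNReal.ofReal C₀ * (ENNReal.ofReal 4 * wSet w (ball a (4 * r)) ^ (1 / p) * M *
            ENNReal.ofReal (C * ψ₂ a r)) :=
          mul_le_mul_right (f1_bound hp hw hψ₁ hcond hMne a hr) _
  -- doubling
  have hdouble : wSet w (ball a (4 * r)) ≤ ED * ED * wSet w (ball a r) := by
    have h41 : wSet w (ball a (4 * r)) ≤ ED * wSet w (ball a (2 * r)) := by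
      have := wSet_doubling_s19 hp hw hApC a (by linarith : (0:ℝ) < 2 * r)
      rwa [show 2 * (2 * r) = 4 * r by ring] at this
    have h21 : wSet w (ball a (2 * r)) ≤ ED * wSet w (ball a r) := wSet_doubling_s19 hp hw hApC a hr
    calc wSet w (ball a (4 * r)) ≤ ED * (ED * wSet w (ball a r)) :=
          le_trans h41 (mul_le_mul_right h21 _)
      _ = ED * ED * wSet w (ball a r) := by ring
  have hd4 : wSet w (ball a (4 * r)) ^ ((1:ℝ)/p) ≤
      (ED * ED) ^ ((1:ℝ)/p) * wSet w (ball a r) ^ ((1:ℝ)/p) := by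
    refine le_trans (ENNReal.rpow_le_rpow hdouble (by positivity)) ?_
    rw [ENNReal.mul_rpow_of_nonneg _ _ (by positivity : (0:ℝ) ≤ 1/p)]
  -- cancellation facts
  have hψ2pos : 0 < ψ₂ a r := hψ₂ a r hr
  have hcψ : (ENNReal.ofReal (ψ₂ a r))⁻¹ * ENNReal.ofReal (ψ₂ a r) = 1 :=
    ENNReal.inv_mul_cancel (by simpa using hψ2pos) ENNReal.ofReal_ne_top
  have hν0 : wSet w (ball a r) ≠ 0 := (wSet_pos hw a hr).ne'
  have hνt : wSet w (ball a r) ≠ ⊤ := (wSet_lt_top hw a r).ne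
  have hcν : wSet w (ball a r) ^ (-(1/p)) * wSet w (ball a r) ^ ((1:ℝ)/p) = 1 := by
    rw [ENNReal.rpow_neg, ENNReal.inv_mul_cancel
      (ENNReal.rpow_pos (pos_iff_ne_zero.mpr hν0) hνt).ne'
      (ENNReal.rpow_ne_top_of_nonneg (by positivity) hνt)]
  have hCsplit : ENNReal.ofReal (C * ψ₂ a r) = ENNReal.ofReal C * ENNReal.ofReal (ψ₂ a r) :=
    ENNReal.ofReal_mul (le_of_lt hC)
  -- put everything together
  set ν : ℝ≥0∞ := wSet w (ball a r) with hνdef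
  set Ψ : ℝ≥0∞ := ENNReal.ofReal (ψ₂ a r) with hΨdef
  calc Ψ⁻¹ * ν ^ (-(1/p)) * wLp p w (T f) (ball a r)
      ≤ Ψ⁻¹ * ν ^ (-(1/p)) *
          (2 * (wLp p w (T f₁) (ball a r) + K * ν ^ ((1:ℝ)/p))) :=
        mul_le_mul_right hsplit _
    _ = 2 * (Ψ⁻¹ * ν ^ (-(1/p)) * wLp p w (T f₁) (ball a r) +
          Ψ⁻¹ * (ν ^ (-(1/p)) * ν ^ ((1:ℝ)/p)) * K) := by ring
    _ ≤ 2 * (𝒜 * M + ℬ * M) := ?_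
    _ = 𝒦 * M := by rw [h𝒦def]; ring
  refine mul_le_mul_right (add_le_add ?_ ?_) _
  · -- the f₁ part
    calc Ψ⁻¹ * ν ^ (-(1/p)) * wLp p w (T f₁) (ball a r)
        ≤ Ψ⁻¹ * ν ^ (-(1/p)) * (ENNReal.ofReal C₀ * (ENNReal.ofReal 4 *
            wSet w (ball a (4 * r)) ^ (1 / p) * M * ENNReal.ofReal (C * ψ₂ a r))) :=
          mul_le_mul_right hTf1 _
      _ ≤ Ψ⁻¹ * ν ^ (-(1/p)) * (ENNReal.ofReal C₀ * (ENNReal.ofReal 4 *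
            ((ED * ED) ^ ((1:ℝ)/p) * ν ^ ((1:ℝ)/p)) * M * (ENNReal.ofReal C * Ψ))) := by
          rw [hCsplit]
          gcongr
      _ = (Ψ⁻¹ * Ψ) * (ν ^ (-(1/p)) * ν ^ ((1:ℝ)/p)) *
            (ENNReal.ofReal C₀ * ENNReal.ofReal 4 * (ED * ED) ^ ((1:ℝ)/p) *
              ENNReal.ofReal C * M) := by ring
      _ = 𝒜 * M := by rw [hcψ, hcν, h𝒜def]; ring
  · -- the f₂ part
    calc Ψ⁻¹ * (ν ^ (-(1/p)) * ν ^ ((1:ℝ)/p)) * K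
        = Ψ⁻¹ * K := by rw [hcν, mul_one]
      _ ≤ Ψ⁻¹ * (ENNReal.ofReal A * ((2:ℝ≥0∞) ^ n *
            ((2:ℝ≥0∞) ^ (n + 1) * v1 * ENNReal.ofReal CA ^ (1 / p) * M *
              (ENNReal.ofReal C * Ψ)))) := by
          rw [← hCsplit]
          exact mul_le_mul_right (mul_le_mul_right (mul_le_mul_right hJbound _) _) _
      _ = (Ψ⁻¹ * Ψ) * (ENNReal.ofReal A * (2:ℝ≥0∞) ^ n *
            ((2:ℝ≥0∞) ^ (n + 1) * v1 * ENNReal.ofReal CA ^ (1 / p)) *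
            ENNReal.ofReal C * M) := by ring
      _ = ℬ * M := by rw [hcψ, hℬdef]; ring
end
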